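/- Let 𝒫 be a finite set of integer pairs p = (p₁,p₂) with 0 ≤ p₁ ≤ p₂ and p₂ ≠ 0, and let {A_p}_{p∈𝒫} be real numbers with 8 Σ_{p∈𝒫} c_p A_p = 1 and Σ_{p∈𝒫} (p₁²+p₂²) c_p A_p ≠ 0; set M_𝒫 = (1/2)(Σ_{p∈𝒫} (p₁²+p₂²) c_p A_p)⁻¹. Let f and g be continuously differentiable on an open neighborhood of the unit square S = [0,1]². For each integer m ≥ 0 define 𝓔_m(f,g) = (M_𝒫/2) Σ_{p∈𝒫} A_p Σ ( B_{w'}(f) − B_w(f) )( B_{w'}(g) − B_w(g) ), where the inner sum is over all ordered pairs of words w, w' of length m in {1,2,3,4} such that the m-cells F_{w'}S and F_wS are p-neighbors. Then lim_{m→∞} 𝓔_m(f,g) = ∫_S ∇f · ∇g dμ. -/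

import Mathlib

open MeasureTheory Real Filter Topology

noncomputable section

/-- The `l`-square centered at `x`. -/
def Dsq (x : ℝ × ℝ) (l : ℝ) : Set (ℝ × ℝ) :=
  Set.Icc (x.1 - l / 2) (x.1 + l / 2) ×ˢ Set.Icc (x.2 - l / 2) (x.2 + l / 2)

/-- `I(f,x,l)`: the average of `f` over the `l`-square centered at `x`. -/
def Iavg (f : ℝ × ℝ → ℝ) (x : ℝ × ℝ) (l : ℝ) : ℝ :=
  (1 / l ^ 2) * ∫ ξ in Dsq x l, f ξ

/-- `D(x',l)` is a `p`-neighbor of `D(x,l)`. -/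
def isNbr (p : ℤ × ℤ) (l : ℝ) (x x' : ℝ × ℝ) : Prop :=
  (|x'.1 - x.1| = (p.1 : ℝ) * l ∧ |x'.2 - x.2| = (p.2 : ℝ) * l) ∨
    (|x'.1 - x.1| = (p.2 : ℝ) * l ∧ |x'.2 - x.2| = (p.1 : ℝ) * l)

/-- `I_p(f,x,l)`: sum of averages over all `p`-neighbors of `D(x,l)`. -/
def Ipavg (f : ℝ × ℝ → ℝ) (p : ℤ × ℤ) (x : ℝ × ℝ) (l : ℝ) : ℝ :=
  ∑ᶠ x' ∈ {x' : ℝ × ℝ | isNbr p l x x'}, Iavg f x' l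

/-- The constant `c_p` (for integer pairs with `0 ≤ p₁ ≤ p₂`). -/
def cP (p : ℤ × ℤ) : ℝ :=
  if p.1 = 0 ∧ p.2 = 0 then 1 / 8 else if p.1 = 0 ∨ p.1 = p.2 then 1 / 2 else 1

/-- The constant `T_p^(k)`. -/
def Tc (p : ℤ × ℤ) (k : ℕ) : ℝ :=
  2 * cP p *
    (((2 * (p.1 : ℂ) + 1) + (2 * (p.2 : ℂ) + 1) * Complex.I) ^ (4 * k + 2)
      - ((2 * (p.1 : ℂ) - 1) + (2 * (p.2 : ℂ) + 1) * Complex.I) ^ (4 * k + 2)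
      + ((2 * (p.1 : ℂ) - 1) + (2 * (p.2 : ℂ) - 1) * Complex.I) ^ (4 * k + 2)
      - ((2 * (p.1 : ℂ) + 1) + (2 * (p.2 : ℂ) - 1) * Complex.I) ^ (4 * k + 2)).im

/-- The polynomial harmonic function `f_n^x`. -/
def fP (x : ℝ × ℝ) (n : ℕ) (ξ : ℝ × ℝ) : ℝ :=
  ∑ j ∈ Finset.range (n / 2 + 1),
    (-1 : ℝ) ^ j * (ξ.1 - x.1) ^ (n - 2 * j) * (ξ.2 - x.2) ^ (2 * j) /
      (((n - 2 * j).factorial : ℝ) * ((2 * j).factorial : ℝ))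

/-- The polynomial harmonic function `g_n^x`. -/
def gP (x : ℝ × ℝ) (n : ℕ) (ξ : ℝ × ℝ) : ℝ :=
  ∑ j ∈ Finset.range ((n - 1) / 2 + 1),
    (-1 : ℝ) ^ j * (ξ.1 - x.1) ^ (n - 2 * j - 1) * (ξ.2 - x.2) ^ (2 * j + 1) /
      (((n - 2 * j - 1).factorial : ℝ) * ((2 * j + 1).factorial : ℝ))

/-- Partial derivative in the first coordinate. -/
def pd1 (f : ℝ × ℝ → ℝ) (y : ℝ × ℝ) : ℝ := fderiv ℝ f y (1, 0)

/-- Partial derivative in the second coordinate. -/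
def pd2 (f : ℝ × ℝ → ℝ) (y : ℝ × ℝ) : ℝ := fderiv ℝ f y (0, 1)

/-- `h` is harmonic on the open set `Ω`. -/
def HarmonicOn (h : ℝ × ℝ → ℝ) (Ω : Set (ℝ × ℝ)) : Prop :=
  ContDiffOn ℝ 2 h Ω ∧ ∀ y ∈ Ω, pd1 (pd1 h) y + pd2 (pd2 h) y = 0

/-- `‖𝒫‖ = max_{p ∈ 𝒫} ‖2p+(1,1)‖`. -/
def PNorm (P : Finset (ℤ × ℤ)) : ℝ :=
  sSup ((fun p : ℤ × ℤ =>
    Real.sqrt ((2 * (p.1 : ℝ) + 1) ^ 2 + (2 * (p.2 : ℝ) + 1) ^ 2)) '' ↑P)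

/-- The four corners of the unit square. -/
def qv : Fin 4 → ℝ × ℝ := ![(0, 0), (1, 0), (1, 1), (0, 1)]

/-- The contraction `F_i(x) = (x + q_i)/2`. -/
def Fc (i : Fin 4) (x : ℝ × ℝ) : ℝ × ℝ := ((x.1 + (qv i).1) / 2, (x.2 + (qv i).2) / 2)

/-- `F_w = F_{w₁} ∘ ⋯ ∘ F_{w_m}` for a word `w` of length `m`. -/
def Fword {m : ℕ} (w : Fin m → Fin 4) : ℝ × ℝ → ℝ × ℝ :=
  (List.ofFn w).foldr (fun i acc => Fc i ∘ acc) id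

/-- The center of the `m`-cell `F_w S`. -/
def cellCtr {m : ℕ} (w : Fin m → Fin 4) : ℝ × ℝ := Fword w (1 / 2, 1 / 2)

/-- `B_w(f)`: the average of `f` over the `m`-cell `F_w S` (a dyadic square of
side length `2⁻ᵐ` centered at `cellCtr w`). -/
def Bav (f : ℝ × ℝ → ℝ) {m : ℕ} (w : Fin m → Fin 4) : ℝ :=
  Iavg f (cellCtr w) ((1 / 2) ^ m)
open scoped Classical

/-- The discrete energy form `𝓔_m(f,g)` on the unit square. -/
def Em (P : Finset (ℤ × ℤ)) (A : ℤ × ℤ → ℝ) (f g : ℝ × ℝ → ℝ) (m : ℕ) : ℝ :=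
  (((1 / 2) * (∑ p ∈ P, ((p.1 : ℝ) ^ 2 + (p.2 : ℝ) ^ 2) * cP p * A p)⁻¹) / 2) *
    ∑ p ∈ P, A p *
      ∑ w : Fin m → Fin 4, ∑ w' : Fin m → Fin 4,
        if isNbr p ((1 / 2) ^ m) (cellCtr w) (cellCtr w') then
          (Bav f w' - Bav f w) * (Bav g w' - Bav g w)
        else 0

namespace S14


def ll (m : ℕ) : ℝ := (1/2 : ℝ) ^ m

lemma ll_pos (m : ℕ) : 0 < ll m := by unfold ll; positivity

def ctr (m : ℕ) (a b : ℤ) : ℝ × ℝ := (((a : ℝ) + 1/2) * ll m, ((b : ℝ) + 1/2) * ll m)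

def u (f : ℝ × ℝ → ℝ) (m : ℕ) (a b : ℤ) : ℝ := Iavg f (ctr m a b) (ll m)

def b1 : Fin 4 → ℕ := ![0,1,1,0]
def b2 : Fin 4 → ℕ := ![0,0,1,1]

def Aw {m : ℕ} (w : Fin m → Fin 4) : ℕ := ∑ i, b1 (w i) * 2 ^ (m - 1 - (i : ℕ))
def Bw {m : ℕ} (w : Fin m → Fin 4) : ℕ := ∑ i, b2 (w i) * 2 ^ (m - 1 - (i : ℕ))

lemma qv_eq (i : Fin 4) : qv i = ((b1 i : ℝ), (b2 i : ℝ)) := by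
  fin_cases i <;> simp [qv, b1, b2]

lemma Fword_cons {m : ℕ} (i : Fin 4) (w : Fin m → Fin 4) :
    Fword (Fin.cons i w) = Fc i ∘ Fword w := by
  simp [Fword, List.ofFn_succ, Function.comp]

lemma Aw_cons {m : ℕ} (i : Fin 4) (w : Fin m → Fin 4) :
    Aw (Fin.cons i w) = b1 i * 2 ^ m + Aw w := by
  unfold Aw
  rw [Fin.sum_univ_succ]
  simp only [Fin.cons_zero, Fin.cons_succ, Fin.val_zero, Fin.val_succ, Nat.add_sub_cancel,
    Nat.sub_zero]
  congr 1
  exact Finset.sum_congr rfl fun x _ => by rw [Nat.sub_sub, Nat.add_comm]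

lemma Bw_cons {m : ℕ} (i : Fin 4) (w : Fin m → Fin 4) :
    Bw (Fin.cons i w) = b2 i * 2 ^ m + Bw w := by
  unfold Bw
  rw [Fin.sum_univ_succ]
  simp only [Fin.cons_zero, Fin.cons_succ, Fin.val_zero, Fin.val_succ, Nat.add_sub_cancel,
    Nat.sub_zero]
  congr 1
  exact Finset.sum_congr rfl fun x _ => by rw [Nat.sub_sub, Nat.add_comm]

lemma Aw_lt {m : ℕ} (w : Fin m → Fin 4) : Aw w < 2 ^ m ∧ Bw w < 2 ^ m := by
  induction m with
  | zero => simp [Aw, Bw]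
  | succ m ih =>
    rw [← Fin.cons_self_tail w, Aw_cons, Bw_cons]
    have h1 : b1 (w 0) ≤ 1 := (by decide : ∀ i : Fin 4, b1 i ≤ 1) (w 0)
    have h2 : b2 (w 0) ≤ 1 := (by decide : ∀ i : Fin 4, b2 i ≤ 1) (w 0)
    have := ih (Fin.tail w)
    have e1 : b1 (w 0) * 2 ^ m ≤ 1 * 2 ^ m := Nat.mul_le_mul_right (2 ^ m) h1
    have e2 : b2 (w 0) * 2 ^ m ≤ 1 * 2 ^ m := Nat.mul_le_mul_right (2 ^ m) h2
    have hs : (2:ℕ) ^ (m+1) = 2 ^ m * 2 := pow_succ 2 m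
    omega

lemma cellCtr_eq {m : ℕ} (w : Fin m → Fin 4) : cellCtr w = ctr m (Aw w) (Bw w) := by
  induction m with
  | zero =>
    simp [cellCtr, Fword, List.ofFn, ctr, Aw, Bw, ll]
  | succ m ih =>
    rw [← Fin.cons_self_tail w]
    have : cellCtr (Fin.cons (w 0) (Fin.tail w)) = Fc (w 0) (cellCtr (Fin.tail w)) := by
      unfold cellCtr; rw [Fword_cons]; rfl
    rw [this, ih (Fin.tail w), Aw_cons, Bw_cons]
    have hk : (1/2 : ℝ) ^ m * 2 ^ m = 1 := by
      rw [one_div, inv_pow, inv_mul_cancel₀ (by positivity)]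
    unfold Fc ctr ll
    rw [qv_eq]
    have e : ∀ (c : ℕ) (a : ℤ), ((((a : ℝ) + 1/2) * (1/2)^m + (c : ℝ)) / 2)
        = (((((c * 2 ^ m : ℕ) : ℤ) + a : ℤ) : ℝ) + 1/2) * (1/2) ^ (m+1) := by
      intro c a
      push_cast
      rw [pow_succ]
      linear_combination (-(c:ℝ)/2) * hk
    simp only [Prod.mk.injEq]
    constructor
    · exact e (b1 (w 0)) (Aw (Fin.tail w))
    · exact e (b2 (w 0)) (Bw (Fin.tail w))

lemma pair_inj {m : ℕ} (w w' : Fin m → Fin 4)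
    (h1 : Aw w = Aw w') (h2 : Bw w = Bw w') : w = w' := by
  induction m with
  | zero => funext i; exact i.elim0
  | succ m ih =>
    have hb : ∀ i j : Fin 4, b1 i = b1 j → b2 i = b2 j → i = j := by decide
    have hbnd : ∀ i : Fin 4, b1 i ≤ 1 ∧ b2 i ≤ 1 := by decide
    rw [← Fin.cons_self_tail w, ← Fin.cons_self_tail w'] at h1 h2 ⊢
    rw [Aw_cons, Aw_cons] at h1
    rw [Bw_cons, Bw_cons] at h2
    have ha := Aw_lt (Fin.tail w); have ha' := Aw_lt (Fin.tail w')
    have d1 : b1 (w 0) = b1 (w' 0) ∧ Aw (Fin.tail w) = Aw (Fin.tail w') := by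
      have u1 := (hbnd (w 0)).1; have u2 := (hbnd (w' 0)).1
      interval_cases h : b1 (w 0) <;> interval_cases h' : b1 (w' 0) <;> omega
    have d2 : b2 (w 0) = b2 (w' 0) ∧ Bw (Fin.tail w) = Bw (Fin.tail w') := by
      have u1 := (hbnd (w 0)).2; have u2 := (hbnd (w' 0)).2
      interval_cases h : b2 (w 0) <;> interval_cases h' : b2 (w' 0) <;> omega
    rw [hb (w 0) (w' 0) d1.1 d2.1, ih (Fin.tail w) (Fin.tail w') d1.2 d2.2]

lemma sum_reindex {m : ℕ} (G : ℕ × ℕ → ℝ) :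
    ∑ w : Fin m → Fin 4, G (Aw w, Bw w)
      = ∑ a ∈ Finset.range (2^m), ∑ b ∈ Finset.range (2^m), G (a, b) := by
  classical
  have hinj : ∀ w ∈ (Finset.univ : Finset (Fin m → Fin 4)), ∀ w' ∈ Finset.univ,
      (fun w => (Aw w, Bw w)) w = (fun w => (Aw w, Bw w)) w' → w = w' := by
    intro w _ w' _ h
    exact pair_inj w w' (congrArg Prod.fst h) (congrArg Prod.snd h)
  have himg : Finset.image (fun w : Fin m → Fin 4 => (Aw w, Bw w)) Finset.univ
      = Finset.range (2^m) ×ˢ Finset.range (2^m) := by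
    apply Finset.eq_of_subset_of_card_le
    · intro x hx
      simp only [Finset.mem_image] at hx
      obtain ⟨w, _, rfl⟩ := hx
      simp [Finset.mem_product, (Aw_lt w).1, (Aw_lt w).2]
    · rw [Finset.card_product, Finset.card_range,
        Finset.card_image_of_injOn (fun w _ w' hw' h => hinj w (by simp) w' (by simp) h)]
      rw [Finset.card_univ]
      simp only [Fintype.card_fun, Fintype.card_fin]
      rw [show (4:ℕ) = 2*2 from rfl, mul_pow]
  rw [← Finset.sum_product', ← himg, Finset.sum_image hinj]

def Qp (p : ℤ × ℤ) : Finset (ℤ × ℤ) :=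
  {(p.1,p.2),(p.1,-p.2),(-p.1,p.2),(-p.1,-p.2),(p.2,p.1),(p.2,-p.1),(-p.2,p.1),(-p.2,-p.1)}

lemma isNbr_iff {p : ℤ × ℤ} (h1 : 0 ≤ p.1) (h2 : 0 ≤ p.2) {l : ℝ} (hl : 0 < l)
    (x x' : ℝ × ℝ) :
    isNbr p l x x' ↔ ∃ q ∈ Qp p, x'.1 = x.1 + (q.1 : ℝ) * l ∧ x'.2 = x.2 + (q.2 : ℝ) * l := by
  have n1 : (0:ℝ) ≤ (p.1:ℝ) * l := mul_nonneg (by exact_mod_cast h1) hl.le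
  have n2 : (0:ℝ) ≤ (p.2:ℝ) * l := mul_nonneg (by exact_mod_cast h2) hl.le
  unfold isNbr
  rw [abs_eq n1, abs_eq n2, abs_eq n2, abs_eq n1]
  constructor
  · rintro (⟨(h|h), (h'|h')⟩ | ⟨(h|h), (h'|h')⟩)
    · exact ⟨(p.1, p.2), by simp [Qp], by push_cast; constructor <;> linarith⟩
    · exact ⟨(p.1, -p.2), by simp [Qp], by push_cast; constructor <;> linarith⟩
    · exact ⟨(-p.1, p.2), by simp [Qp], by push_cast; constructor <;> linarith⟩
    · exact ⟨(-p.1, -p.2), by simp [Qp], by push_cast; constructor <;> linarith⟩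
    · exact ⟨(p.2, p.1), by simp [Qp], by push_cast; constructor <;> linarith⟩
    · exact ⟨(p.2, -p.1), by simp [Qp], by push_cast; constructor <;> linarith⟩
    · exact ⟨(-p.2, p.1), by simp [Qp], by push_cast; constructor <;> linarith⟩
    · exact ⟨(-p.2, -p.1), by simp [Qp], by push_cast; constructor <;> linarith⟩
  · rintro ⟨q, hq, e1, e2⟩
    simp only [Qp, Finset.mem_insert, Finset.mem_singleton] at hq
    rcases hq with rfl|rfl|rfl|rfl|rfl|rfl|rfl|rfl
    · exact Or.inl ⟨Or.inl (by push_cast at e1; linarith), Or.inl (by push_cast at e2; linarith)⟩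
    · exact Or.inl ⟨Or.inl (by push_cast at e1; linarith), Or.inr (by push_cast at e2; linarith)⟩
    · exact Or.inl ⟨Or.inr (by push_cast at e1; linarith), Or.inl (by push_cast at e2; linarith)⟩
    · exact Or.inl ⟨Or.inr (by push_cast at e1; linarith), Or.inr (by push_cast at e2; linarith)⟩
    · exact Or.inr ⟨Or.inl (by push_cast at e1; linarith), Or.inl (by push_cast at e2; linarith)⟩
    · exact Or.inr ⟨Or.inl (by push_cast at e1; linarith), Or.inr (by push_cast at e2; linarith)⟩
    · exact Or.inr ⟨Or.inr (by push_cast at e1; linarith), Or.inl (by push_cast at e2; linarith)⟩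
    · exact Or.inr ⟨Or.inr (by push_cast at e1; linarith), Or.inr (by push_cast at e2; linarith)⟩

lemma sum_range_ite (n : ℕ) (c : ℤ) (F : ℤ → ℝ) :
    (∑ a ∈ Finset.range n, if (a : ℤ) = c then F a else 0)
      = if 0 ≤ c ∧ c < (n:ℤ) then F c else 0 := by
  classical
  by_cases h : 0 ≤ c ∧ c < (n:ℤ)
  · rw [if_pos h]
    rw [Finset.sum_eq_single c.toNat]
    · rw [if_pos (by omega), Int.toNat_of_nonneg h.1]
    · intro a _ ha
      rw [if_neg (by omega)]
    · intro hmem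
      exact absurd (Finset.mem_range.mpr (by omega)) hmem
  · rw [if_neg h]
    apply Finset.sum_eq_zero
    intro a ha
    rw [Finset.mem_range] at ha
    rw [if_neg (by omega)]

lemma sum_ite_pull {α : Type*} (s : Finset α) (P : Prop) [Decidable P] (F : α → ℝ) :
    (∑ a ∈ s, if P then F a else 0) = if P then ∑ a ∈ s, F a else 0 := by
  by_cases h : P <;> simp [h]


def SQ : Set (ℝ × ℝ) := Set.Icc (0:ℝ) 1 ×ˢ Set.Icc (0:ℝ) 1


lemma disjoint_prod' {s s' t t' : Set ℝ} (h : Disjoint s s' ∨ Disjoint t t') :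
    Disjoint (s ×ˢ t) (s' ×ˢ t') := by
  rw [Set.disjoint_iff_inter_eq_empty, Set.prod_inter_prod]
  rcases h with h | h
  · rw [Set.disjoint_iff_inter_eq_empty] at h; rw [h]; exact Set.empty_prod
  · rw [Set.disjoint_iff_inter_eq_empty] at h; rw [h]; exact Set.prod_empty

lemma Ico_disj_lt {l : ℝ} (hl : 0 < l) {a a' : ℕ} (h : a < a') :
    Disjoint (Set.Ico ((a:ℝ) * l) (((a:ℝ)+1) * l)) (Set.Ico ((a':ℝ) * l) (((a':ℝ)+1) * l)) := by
  apply Set.Ico_disjoint_Ico.2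
  have : ((a:ℝ)+1) * l ≤ (a':ℝ) * l := by
    apply mul_le_mul_of_nonneg_right _ hl.le
    exact_mod_cast h
  exact le_trans (min_le_left _ _) (le_trans this (le_max_right _ _))

lemma Ico_disj {l : ℝ} (hl : 0 < l) {a a' : ℕ} (h : a ≠ a') :
    Disjoint (Set.Ico ((a:ℝ) * l) (((a:ℝ)+1) * l)) (Set.Ico ((a':ℝ) * l) (((a':ℝ)+1) * l)) := by
  rcases h.lt_or_gt with hlt | hlt
  · exact Ico_disj_lt hl hlt
  · exact (Ico_disj_lt hl hlt).symm

lemma aeeq_IcoIcc (a b c d : ℝ) :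
    (Set.Ico a b ×ˢ Set.Ico c d : Set (ℝ × ℝ)) =ᵐ[volume] (Set.Icc a b ×ˢ Set.Icc c d) := by
  rw [MeasureTheory.ae_eq_set]
  constructor
  · have : (Set.Ico a b ×ˢ Set.Ico c d : Set (ℝ × ℝ)) \ (Set.Icc a b ×ˢ Set.Icc c d) = ∅ := by
      apply Set.diff_eq_empty.2
      exact Set.prod_mono Set.Ico_subset_Icc_self Set.Ico_subset_Icc_self
    rw [this]; simp
  · apply measure_mono_null
      (show (Set.Icc a b ×ˢ Set.Icc c d : Set (ℝ×ℝ)) \ (Set.Ico a b ×ˢ Set.Ico c d)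
        ⊆ ({b} ×ˢ Set.univ) ∪ (Set.univ ×ˢ {d}) from ?_)
    · apply measure_union_null
      · rw [MeasureTheory.Measure.volume_eq_prod, MeasureTheory.Measure.prod_prod]
        simp
      · rw [MeasureTheory.Measure.volume_eq_prod, MeasureTheory.Measure.prod_prod]
        simp
    · rintro ⟨x, y⟩ ⟨⟨hx, hy⟩, hn⟩
      simp only [Set.mem_prod, Set.mem_Ico] at hn
      simp only [Set.mem_Icc] at hx hy
      by_cases hxb : x = b
      · exact Or.inl ⟨by simpa using hxb, trivial⟩
      · by_cases hyd : y = d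
        · exact Or.inr ⟨trivial, by simpa using hyd⟩
        · exact absurd ⟨⟨hx.1, lt_of_le_of_ne hx.2 hxb⟩, hy.1, lt_of_le_of_ne hy.2 hyd⟩ hn





lemma hk (m : ℕ) : (2:ℝ)^m * ll m = 1 := by
  unfold ll
  rw [one_div, inv_pow, mul_inv_cancel₀ (by positivity)]

def cell1 (m : ℕ) (a : ℕ) : Set ℝ := Set.Icc ((a:ℝ) * ll m) (((a:ℝ)+1) * ll m)
def cell1o (m : ℕ) (a : ℕ) : Set ℝ := Set.Ico ((a:ℝ) * ll m) (((a:ℝ)+1) * ll m)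

lemma cast_le_pow {m a : ℕ} (ha : a < 2^m) : (a:ℝ) + 1 ≤ (2:ℝ)^m := by
  have : (a:ℕ) + 1 ≤ 2^m := ha
  exact_mod_cast this

lemma cell1_subset {m : ℕ} {a : ℕ} (ha : a < 2^m) : cell1 m a ⊆ Set.Icc 0 1 := by
  apply Set.Icc_subset_Icc
  · exact mul_nonneg (by positivity) (ll_pos m).le
  · calc ((a:ℝ)+1) * ll m ≤ (2:ℝ)^m * ll m :=
        mul_le_mul_of_nonneg_right (cast_le_pow ha) (ll_pos m).le
      _ = 1 := hk m

lemma unionIco (m : ℕ) :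
    (⋃ a ∈ Finset.range (2^m), cell1o m a) = Set.Ico (0:ℝ) 1 := by
  ext x
  simp only [Set.mem_iUnion, Finset.mem_range, Set.mem_Ico, exists_prop, cell1o]
  have hl := ll_pos m
  constructor
  · rintro ⟨a, ha, h1, h2⟩
    refine ⟨le_trans (mul_nonneg (by positivity) hl.le) h1, lt_of_lt_of_le h2 ?_⟩
    calc ((a:ℝ)+1) * ll m ≤ (2:ℝ)^m * ll m :=
        mul_le_mul_of_nonneg_right (cast_le_pow ha) hl.le
      _ = 1 := hk m
  · rintro ⟨h0, h1⟩
    have hfl0 : 0 ≤ ⌊x / ll m⌋ := Int.floor_nonneg.2 (by positivity)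
    have hflt : ⌊x / ll m⌋ < ((2^m : ℕ) : ℤ) := by
      apply Int.floor_lt.2
      push_cast
      rw [div_lt_iff₀ hl]
      calc x < 1 := h1
        _ = 2^m * ll m := (hk m).symm
    refine ⟨⌊x / ll m⌋.toNat, by omega, ?_, ?_⟩
    · have h5 : (⌊x / ll m⌋ : ℝ) ≤ x / ll m := Int.floor_le _
      have hc : ((⌊x / ll m⌋.toNat : ℕ) : ℝ) = ((⌊x / ll m⌋ : ℤ) : ℝ) := by
        exact_mod_cast Int.toNat_of_nonneg hfl0
      rw [hc]
      calc (⌊x / ll m⌋ : ℝ) * ll m ≤ (x / ll m) * ll m :=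
            mul_le_mul_of_nonneg_right h5 hl.le
        _ = x := by field_simp
    · have h5 : x / ll m < ⌊x / ll m⌋ + 1 := Int.lt_floor_add_one _
      have hc : ((⌊x / ll m⌋.toNat : ℕ) : ℝ) = ((⌊x / ll m⌋ : ℤ) : ℝ) := by
        exact_mod_cast Int.toNat_of_nonneg hfl0
      rw [hc]
      calc x = (x / ll m) * ll m := by field_simp
        _ < ((⌊x / ll m⌋ : ℝ) + 1) * ll m := by
            apply mul_lt_mul_of_pos_right h5 hl

lemma unionCells (m : ℕ) :
    (⋃ ab ∈ (Finset.range (2^m) ×ˢ Finset.range (2^m)),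
      (cell1o m ab.1 ×ˢ cell1o m ab.2))
    = Set.Ico (0:ℝ) 1 ×ˢ Set.Ico (0:ℝ) 1 := by
  ext ⟨x, y⟩
  have h1 := Set.ext_iff.1 (unionIco m) x
  have h2 := Set.ext_iff.1 (unionIco m) y
  simp only [Set.mem_iUnion, Finset.mem_range, exists_prop] at h1 h2
  simp only [Set.mem_iUnion, Finset.mem_product, Finset.mem_range, Set.mem_prod, exists_prop]
  constructor
  · rintro ⟨⟨a, b⟩, ⟨ha, hb⟩, hx, hy⟩
    exact ⟨h1.1 ⟨a, ha, hx⟩, h2.1 ⟨b, hb, hy⟩⟩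
  · rintro ⟨hx, hy⟩
    obtain ⟨a, ha, hxa⟩ := h1.2 hx
    obtain ⟨b, hb, hyb⟩ := h2.2 hy
    exact ⟨(a, b), ⟨ha, hb⟩, hxa, hyb⟩

lemma integral_split (m : ℕ) (h : ℝ × ℝ → ℝ) (hint : IntegrableOn h SQ volume) :
    ∫ ξ in SQ, h ξ = ∑ a ∈ Finset.range (2^m), ∑ b ∈ Finset.range (2^m),
      ∫ ξ in (cell1 m a ×ˢ cell1 m b), h ξ := by
  have e1 : ∫ ξ in SQ, h ξ = ∫ ξ in (Set.Ico 0 1 ×ˢ Set.Ico 0 1 : Set (ℝ × ℝ)), h ξ :=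
    (setIntegral_congr_set (aeeq_IcoIcc 0 1 0 1)).symm
  rw [e1, ← unionCells m, MeasureTheory.integral_biUnion_finset]
  · rw [Finset.sum_product]
    refine Finset.sum_congr rfl fun a ha => Finset.sum_congr rfl fun b hb => ?_
    exact setIntegral_congr_set (aeeq_IcoIcc _ _ _ _)
  · intro i _
    exact (measurableSet_Ico.prod measurableSet_Ico)
  · intro i hi j hj hij
    simp only [Finset.coe_product, Set.mem_prod, Finset.mem_coe, Finset.mem_range] at hi hj
    rcases Decidable.eq_or_ne i.1 j.1 with e | e
    · have e2 : i.2 ≠ j.2 := fun e2 => hij (Prod.ext e e2)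
      exact disjoint_prod' (Or.inr (Ico_disj (ll_pos m) e2))
    · exact disjoint_prod' (Or.inl (Ico_disj (ll_pos m) e))
  · intro i hi
    simp only [Finset.mem_product, Finset.mem_range] at hi
    apply hint.mono_set
    refine Set.Subset.trans (Set.prod_mono Set.Ico_subset_Icc_self Set.Ico_subset_Icc_self) ?_
    exact Set.prod_mono (cell1_subset hi.1) (cell1_subset hi.2)

lemma Dsq_ctr (m : ℕ) (a b : ℤ) :
    Dsq (ctr m a b) (ll m) = Set.Icc ((a:ℝ) * ll m) (((a:ℝ)+1) * ll m) ×ˢ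
      Set.Icc ((b:ℝ) * ll m) (((b:ℝ)+1) * ll m) := by
  unfold Dsq ctr
  have e1 : ((a:ℝ) + 1/2) * ll m - ll m / 2 = (a:ℝ) * ll m := by ring
  have e2 : ((a:ℝ) + 1/2) * ll m + ll m / 2 = ((a:ℝ)+1) * ll m := by ring
  have e3 : ((b:ℝ) + 1/2) * ll m - ll m / 2 = (b:ℝ) * ll m := by ring
  have e4 : ((b:ℝ) + 1/2) * ll m + ll m / 2 = ((b:ℝ)+1) * ll m := by ring
  rw [show ((((a:ℝ) + 1/2) * ll m, ((b:ℝ) + 1/2) * ll m) : ℝ × ℝ).1 = ((a:ℝ) + 1/2) * ll m from rfl]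
  rw [show ((((a:ℝ) + 1/2) * ll m, ((b:ℝ) + 1/2) * ll m) : ℝ × ℝ).2 = ((b:ℝ) + 1/2) * ll m from rfl]
  rw [e1, e2, e3, e4]

lemma vol_Dsq {x : ℝ × ℝ} {l : ℝ} (hl : 0 ≤ l) :
    volume (Dsq x l) = ENNReal.ofReal l * ENNReal.ofReal l := by
  unfold Dsq
  rw [MeasureTheory.Measure.volume_eq_prod, MeasureTheory.Measure.prod_prod,
    Real.volume_Icc, Real.volume_Icc]
  congr 1 <;> congr 1 <;> ring

lemma vol_Dsq_toReal {x : ℝ × ℝ} {l : ℝ} (hl : 0 ≤ l) :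
    (volume (Dsq x l)).toReal = l^2 := by
  rw [vol_Dsq hl, ← ENNReal.ofReal_mul hl, ENNReal.toReal_ofReal (by positivity), sq]

lemma vol_Dsq_lt_top (x : ℝ × ℝ) (l : ℝ) : volume (Dsq x l) < ⊤ := by
  rcases le_or_gt 0 l with hl | hl
  · rw [vol_Dsq hl]; exact ENNReal.mul_lt_top ENNReal.ofReal_lt_top ENNReal.ofReal_lt_top
  · unfold Dsq
    rw [MeasureTheory.Measure.volume_eq_prod, MeasureTheory.Measure.prod_prod, Real.volume_Icc]
    rw [ENNReal.ofReal_eq_zero.2 (by linarith)]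
    simp

lemma SQ_compact : IsCompact SQ := isCompact_Icc.prod isCompact_Icc

lemma Dsq_ctr_nat (m : ℕ) (a b : ℕ) :
    Dsq (ctr m a b) (ll m) = cell1 m a ×ˢ cell1 m b := by
  rw [Dsq_ctr]
  unfold cell1
  norm_cast

lemma vol_cell (m : ℕ) (a b : ℕ) :
    volume (cell1 m a ×ˢ cell1 m b) = ENNReal.ofReal (ll m) * ENNReal.ofReal (ll m) := by
  rw [← Dsq_ctr_nat]
  exact vol_Dsq (ll_pos m).le

lemma cell_subset_SQ {m : ℕ} {a b : ℕ} (ha : a < 2^m) (hb : b < 2^m) :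
    (cell1 m a ×ˢ cell1 m b : Set (ℝ × ℝ)) ⊆ SQ :=
  Set.prod_mono (cell1_subset ha) (cell1_subset hb)

lemma ctr_mem_cell (m : ℕ) (a b : ℕ) : ctr m a b ∈ (cell1 m a ×ˢ cell1 m b : Set (ℝ × ℝ)) := by
  rw [← Dsq_ctr_nat]
  have hl := (ll_pos m).le
  exact ⟨⟨by simp; linarith, by simp; linarith⟩, ⟨by simp; linarith, by simp; linarith⟩⟩

lemma nl_sq (m : ℕ) : ((2^m : ℕ) : ℝ) * ((2^m : ℕ) : ℝ) * (ll m)^2 = 1 := by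
  push_cast
  have := hk m
  nlinarith [hk m]

lemma riemann (h : ℝ × ℝ → ℝ) (hc : ContinuousOn h SQ) :
    Tendsto (fun m => ∑ a ∈ Finset.range (2^m), ∑ b ∈ Finset.range (2^m),
      (ll m)^2 * h (ctr m a b)) atTop (𝓝 (∫ ξ in SQ, h ξ)) := by
  have hint : IntegrableOn h SQ volume := hc.integrableOn_compact SQ_compact
  rw [Metric.tendsto_atTop]
  intro ε hε
  obtain ⟨δ, hδ, hδ'⟩ := (Metric.uniformContinuousOn_iff).1
    (SQ_compact.uniformContinuousOn_of_continuous hc) (ε/2) (by positivity)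
  obtain ⟨M, hM⟩ : ∃ M : ℕ, ll M < δ := exists_pow_lt_of_lt_one hδ (by norm_num : (1/2:ℝ) < 1)
  refine ⟨M, fun m hm => ?_⟩
  have hlm : ll m < δ := lt_of_le_of_lt
    (pow_le_pow_of_le_one (by norm_num) (by norm_num) hm) hM
  have hl := ll_pos m
  have key : ∀ a ∈ Finset.range (2^m), ∀ b ∈ Finset.range (2^m),
      |(ll m)^2 * h (ctr m a b) - ∫ ξ in cell1 m a ×ˢ cell1 m b, h ξ| ≤ ε/2 * (ll m)^2 := by
    intro a ha b hb
    rw [Finset.mem_range] at ha hb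
    have hsub := cell_subset_SQ ha hb
    have hcm : ctr m a b ∈ SQ := hsub (ctr_mem_cell m a b)
    have hvolt : volume (cell1 m a ×ˢ cell1 m b) < ⊤ := by
      rw [vol_cell]; exact ENNReal.mul_lt_top ENNReal.ofReal_lt_top ENNReal.ofReal_lt_top
    have hvolr : (volume (cell1 m a ×ˢ cell1 m b)).toReal = (ll m)^2 := by
      rw [← Dsq_ctr_nat]; exact vol_Dsq_toReal hl.le
    have hic : IntegrableOn (fun _ : ℝ × ℝ => h (ctr m a b)) (cell1 m a ×ˢ cell1 m b) volume :=
      integrableOn_const hvolt.ne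
    have hih : IntegrableOn h (cell1 m a ×ˢ cell1 m b) volume := hint.mono_set hsub
    have e1 : (ll m)^2 * h (ctr m a b)
        = ∫ _ in cell1 m a ×ˢ cell1 m b, h (ctr m a b) := by
      rw [setIntegral_const, measureReal_def, hvolr, smul_eq_mul]
    rw [e1, ← integral_sub hic hih]
    have bound : ∀ ξ ∈ (cell1 m a ×ˢ cell1 m b : Set (ℝ × ℝ)),
        ‖h (ctr m a b) - h ξ‖ ≤ ε/2 := by
      intro ξ hξ
      have hξS : ξ ∈ SQ := hsub hξ
      have hd : dist (ctr m a b) ξ < δ := by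
        rw [← Dsq_ctr_nat] at hξ
        obtain ⟨⟨u1, u2⟩, v1, v2⟩ := hξ
        rw [Prod.dist_eq]
        have d1 : dist (ctr m a b).1 ξ.1 ≤ ll m / 2 := by
          rw [Real.dist_eq]; apply abs_le.2; constructor <;> linarith
        have d2 : dist (ctr m a b).2 ξ.2 ≤ ll m / 2 := by
          rw [Real.dist_eq]; apply abs_le.2; constructor <;> linarith
        apply lt_of_le_of_lt (max_le d1 d2)
        linarith
      have := hδ' (ctr m a b) hcm ξ hξS hd
      rw [Real.dist_eq] at this
      exact le_of_lt this
    calc ‖∫ ξ in cell1 m a ×ˢ cell1 m b, (h (ctr m a b) - h ξ)‖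
        ≤ ε/2 * (volume (cell1 m a ×ˢ cell1 m b)).toReal :=
          norm_setIntegral_le_of_norm_le_const hvolt bound
      _ = ε/2 * (ll m)^2 := by rw [hvolr]
  rw [Real.dist_eq, integral_split m h hint, ← Finset.sum_sub_distrib]
  have : |∑ a ∈ Finset.range (2^m), (∑ b ∈ Finset.range (2^m), (ll m)^2 * h (ctr m a b)
        - ∑ b ∈ Finset.range (2^m), ∫ ξ in cell1 m a ×ˢ cell1 m b, h ξ)| ≤ ε/2 := by
    calc |∑ a ∈ Finset.range (2^m), (∑ b ∈ Finset.range (2^m), (ll m)^2 * h (ctr m a b)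
          - ∑ b ∈ Finset.range (2^m), ∫ ξ in cell1 m a ×ˢ cell1 m b, h ξ)|
        ≤ ∑ a ∈ Finset.range (2^m), |∑ b ∈ Finset.range (2^m), (ll m)^2 * h (ctr m a b)
          - ∑ b ∈ Finset.range (2^m), ∫ ξ in cell1 m a ×ˢ cell1 m b, h ξ| :=
          Finset.abs_sum_le_sum_abs _ _
      _ ≤ ∑ a ∈ Finset.range (2^m), ∑ b ∈ Finset.range (2^m),
            |(ll m)^2 * h (ctr m a b) - ∫ ξ in cell1 m a ×ˢ cell1 m b, h ξ| := by
          apply Finset.sum_le_sum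
          intro a _
          rw [← Finset.sum_sub_distrib]
          exact Finset.abs_sum_le_sum_abs _ _
      _ ≤ ∑ a ∈ Finset.range (2^m), ∑ b ∈ Finset.range (2^m), ε/2 * (ll m)^2 := by
          apply Finset.sum_le_sum
          intro a ha
          apply Finset.sum_le_sum
          intro b hb
          exact key a ha b hb
      _ = ε/2 := by
          rw [Finset.sum_const, Finset.sum_const, Finset.card_range, nsmul_eq_mul,
            nsmul_eq_mul]
          have := nl_sq m
          push_cast at this ⊢
          nlinarith [this]
  apply lt_of_le_of_lt _ (by linarith : ε/2 < ε)
  exact this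



lemma measurable_Dsq (x : ℝ × ℝ) (l : ℝ) : MeasurableSet (Dsq x l) :=
  measurableSet_Icc.prod measurableSet_Icc

lemma compact_Dsq (x : ℝ × ℝ) (l : ℝ) : IsCompact (Dsq x l) :=
  isCompact_Icc.prod isCompact_Icc

lemma mem_Dsq_translate {ξ x v : ℝ × ℝ} {l : ℝ} :
    ξ + v ∈ Dsq (x + v) l ↔ ξ ∈ Dsq x l := by
  unfold Dsq
  simp only [Set.mem_prod, Set.mem_Icc, Prod.fst_add, Prod.snd_add]
  constructor <;> rintro ⟨⟨h1, h2⟩, h3, h4⟩ <;>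
    exact ⟨⟨by linarith, by linarith⟩, by linarith, by linarith⟩

lemma integral_translate (f : ℝ × ℝ → ℝ) (x v : ℝ × ℝ) (l : ℝ) :
    ∫ ξ in Dsq (x + v) l, f ξ = ∫ ξ in Dsq x l, f (ξ + v) := by
  rw [← MeasureTheory.integral_indicator (measurable_Dsq (x+v) l),
    ← MeasureTheory.integral_indicator (measurable_Dsq x l)]
  rw [← MeasureTheory.integral_add_right_eq_self
    (fun ξ => (Dsq (x+v) l).indicator f ξ) v]
  congr 1
  funext ξ
  by_cases hmem : ξ ∈ Dsq x l
  · rw [Set.indicator_of_mem hmem, Set.indicator_of_mem (mem_Dsq_translate.2 hmem)]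
  · rw [Set.indicator_of_notMem hmem,
      Set.indicator_of_notMem (fun hc => hmem (mem_Dsq_translate.1 hc))]

lemma mvt_est {f : ℝ × ℝ → ℝ} {Ω : Set (ℝ × ℝ)} (hΩ : IsOpen Ω) (hf : ContDiffOn ℝ 1 f Ω)
    {s : Set (ℝ × ℝ)} (hs : Convex ℝ s) (hsΩ : s ⊆ Ω) (x₀ : ℝ × ℝ)
    {C : ℝ} (hC : ∀ z ∈ s, ‖fderiv ℝ f z - fderiv ℝ f x₀‖ ≤ C)
    {ξ η : ℝ × ℝ} (hξ : ξ ∈ s) (hη : η ∈ s) :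
    ‖f η - f ξ - (fderiv ℝ f x₀) (η - ξ)‖ ≤ C * ‖η - ξ‖ := by
  have hdiff : ∀ z ∈ s, HasFDerivWithinAt (fun z => f z - fderiv ℝ f x₀ z)
      ((fderiv ℝ f z) - (fderiv ℝ f x₀)) s z := by
    intro z hz
    have h1 : HasFDerivAt f (fderiv ℝ f z) z :=
      ((hf.differentiableOn one_ne_zero).differentiableAt (hΩ.mem_nhds (hsΩ hz))).hasFDerivAt
    exact (h1.sub ((fderiv ℝ f x₀).hasFDerivAt)).hasFDerivWithinAt
  have key := Convex.norm_image_sub_le_of_norm_hasFDerivWithin_le hdiff hC hs hξ hη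
  have e : f η - fderiv ℝ f x₀ η - (f ξ - fderiv ℝ f x₀ ξ)
      = f η - f ξ - (fderiv ℝ f x₀) (η - ξ) := by
    rw [map_sub]; ring
  rwa [e] at key


lemma fderiv_pd (f : ℝ × ℝ → ℝ) (x : ℝ × ℝ) (q1 q2 l : ℝ) :
    (fderiv ℝ f x) (q1 * l, q2 * l) = l * (q1 * pd1 f x + q2 * pd2 f x) := by
  have e : ((q1 * l, q2 * l) : ℝ × ℝ) = (q1*l) • ((1:ℝ), (0:ℝ)) + (q2*l) • ((0:ℝ), (1:ℝ)) := by
    simp [Prod.ext_iff]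
  rw [e, map_add, ContinuousLinearMap.map_smul, ContinuousLinearMap.map_smul, smul_eq_mul, smul_eq_mul]
  unfold pd1 pd2
  ring

lemma cell1_subset_int {m : ℕ} {c : ℤ} (h0 : 0 ≤ c) (h1 : c < ((2^m : ℕ) : ℤ)) :
    Set.Icc ((c:ℝ) * ll m) (((c:ℝ)+1) * ll m) ⊆ Set.Icc 0 1 := by
  apply Set.Icc_subset_Icc
  · exact mul_nonneg (by exact_mod_cast h0) (ll_pos m).le
  · have h2 : ((c:ℝ)+1) ≤ (2:ℝ)^m := by
      have h3 : c + 1 ≤ ((2^m : ℕ) : ℤ) := h1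
      have h4 : ((c:ℝ)+1) ≤ ((2^m : ℕ) : ℝ) := by exact_mod_cast h3
      calc ((c:ℝ)+1) ≤ ((2^m : ℕ) : ℝ) := h4
        _ = (2:ℝ)^m := by push_cast; ring
    calc ((c:ℝ)+1) * ll m ≤ (2:ℝ)^m * ll m :=
        mul_le_mul_of_nonneg_right h2 (ll_pos m).le
      _ = 1 := hk m

lemma Dsq_subset_SQ_int {m : ℕ} {a b : ℤ} (ha : 0 ≤ a) (ha' : a < ((2^m : ℕ) : ℤ))
    (hb : 0 ≤ b) (hb' : b < ((2^m : ℕ) : ℤ)) :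
    Dsq (ctr m a b) (ll m) ⊆ SQ := by
  rw [Dsq_ctr]
  exact Set.prod_mono (cell1_subset_int ha ha') (cell1_subset_int hb hb')

lemma ctr_add (m : ℕ) (a b : ℤ) (q : ℤ × ℤ) :
    ctr m (a + q.1) (b + q.2) = ctr m a b + ((q.1:ℝ) * ll m, (q.2:ℝ) * ll m) := by
  unfold ctr
  rw [Prod.mk_add_mk, Prod.ext_iff]
  constructor <;> simp <;> push_cast <;> ring

lemma dist_le_of_mem_Dsq {ξ x : ℝ × ℝ} {l : ℝ} (h : ξ ∈ Dsq x l) : dist ξ x ≤ l / 2 := by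
  obtain ⟨⟨h1, h2⟩, h3, h4⟩ := h
  rw [Prod.dist_eq]
  apply max_le <;> rw [Real.dist_eq] <;> apply abs_le.2 <;> constructor <;> linarith

lemma norm_v_le {q : ℤ × ℤ} {R l : ℝ} (hq1 : |(q.1:ℝ)| ≤ R) (hq2 : |(q.2:ℝ)| ≤ R)
    (hl : 0 ≤ l) : ‖(((q.1:ℝ) * l, (q.2:ℝ) * l) : ℝ × ℝ)‖ ≤ R * l := by
  rw [Prod.norm_def]
  apply max_le <;> rw [norm_eq_abs, abs_mul, abs_of_nonneg hl] <;>
    exact mul_le_mul_of_nonneg_right (by assumption) hl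

lemma SQ_convex : Convex ℝ SQ := (convex_Icc _ _).prod (convex_Icc _ _)

lemma lin_est {f : ℝ × ℝ → ℝ} {Ω : Set (ℝ × ℝ)} (hΩ : IsOpen Ω) (hSΩ : SQ ⊆ Ω)
    (hf : ContDiffOn ℝ 1 f Ω) {δ C R : ℝ} (hR : 0 ≤ R) (hδ : 0 < δ) (hC0 : 0 ≤ C)
    (hδC : ∀ z ∈ SQ, ∀ w ∈ SQ, dist z w < δ → ‖fderiv ℝ f z - fderiv ℝ f w‖ ≤ C)
    {q : ℤ × ℤ} (hq1 : |(q.1:ℝ)| ≤ R) (hq2 : |(q.2:ℝ)| ≤ R)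
    {m : ℕ} {a b : ℕ} (ha : a < 2^m) (hb : b < 2^m)
    (ha' : 0 ≤ (a:ℤ) + q.1) (ha'' : (a:ℤ)+q.1 < ((2^m : ℕ) : ℤ))
    (hb' : 0 ≤ (b:ℤ) + q.2) (hb'' : (b:ℤ)+q.2 < ((2^m : ℕ) : ℤ))
    (hm : (R+1) * ll m < δ) :
    |u f m ((a:ℤ)+q.1) ((b:ℤ)+q.2) - u f m (a:ℤ) (b:ℤ)
      - fderiv ℝ f (ctr m (a:ℤ) (b:ℤ)) ((q.1:ℝ) * ll m, (q.2:ℝ) * ll m)|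
      ≤ C * (R * ll m) := by
  have hl := ll_pos m
  set l := ll m with hldef
  set x := ctr m (a:ℤ) (b:ℤ) with hxdef
  set v : ℝ × ℝ := ((q.1:ℝ) * l, (q.2:ℝ) * l) with hvdef
  have hnv : ‖v‖ ≤ R * l := norm_v_le hq1 hq2 hl.le
  have hxS : x ∈ SQ := cell_subset_SQ ha hb (ctr_mem_cell m a b)
  have hcell : Dsq x l ⊆ SQ :=
    Dsq_subset_SQ_int (by exact_mod_cast Nat.zero_le a) (by exact_mod_cast ha)
      (by exact_mod_cast Nat.zero_le b) (by exact_mod_cast hb)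
  have hctr' : ctr m ((a:ℤ) + q.1) ((b:ℤ) + q.2) = x + v := ctr_add m a b q
  have hcell' : Dsq (x + v) l ⊆ SQ := by
    rw [← hctr']
    exact Dsq_subset_SQ_int ha' ha'' hb' hb''
  -- the convex region
  set s : Set (ℝ × ℝ) := Metric.closedBall x ((R + 1/2) * l) ∩ SQ with hsdef
  have hconv : Convex ℝ s := (convex_closedBall _ _).inter SQ_convex
  have hsΩ : s ⊆ Ω := Set.Subset.trans Set.inter_subset_right hSΩ
  have hCs : ∀ z ∈ s, ‖fderiv ℝ f z - fderiv ℝ f x‖ ≤ C := by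
    rintro z ⟨hz1, hz2⟩
    apply hδC z hz2 x hxS
    calc dist z x ≤ (R + 1/2) * l := Metric.mem_closedBall.1 hz1
      _ < (R+1) * l := by nlinarith
      _ < δ := hm
  have hmemξ : ∀ ξ ∈ Dsq x l, ξ ∈ s := by
    intro ξ hξ
    refine ⟨Metric.mem_closedBall.2 ?_, hcell hξ⟩
    calc dist ξ x ≤ l / 2 := dist_le_of_mem_Dsq hξ
      _ ≤ (R + 1/2) * l := by nlinarith
  have hmemη : ∀ ξ ∈ Dsq x l, ξ + v ∈ s := by
    intro ξ hξ
    have hηS : ξ + v ∈ SQ := hcell' (mem_Dsq_translate.2 hξ)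
    refine ⟨Metric.mem_closedBall.2 ?_, hηS⟩
    have hd : dist (ξ + v) ξ = ‖v‖ := by rw [dist_eq_norm]; simp
    calc dist (ξ + v) x ≤ dist (ξ + v) ξ + dist ξ x := dist_triangle _ _ _
      _ ≤ ‖v‖ + l / 2 := by
          rw [hd]; exact add_le_add le_rfl (dist_le_of_mem_Dsq hξ)
      _ ≤ R * l + l / 2 := by linarith
      _ = (R + 1/2) * l := by ring
  have P : ∀ ξ ∈ Dsq x l, ‖f (ξ + v) - f ξ - (fderiv ℝ f x) v‖ ≤ C * (R * l) := by
    intro ξ hξ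
    have := mvt_est hΩ hf hconv hsΩ x hCs (hmemξ ξ hξ) (hmemη ξ hξ)
    rw [add_sub_cancel_left] at this
    calc ‖f (ξ + v) - f ξ - (fderiv ℝ f x) v‖ ≤ C * ‖v‖ := this
      _ ≤ C * (R * l) := mul_le_mul_of_nonneg_left hnv hC0
  -- integrability
  have hcompact := compact_Dsq x l
  have hif : IntegrableOn f (Dsq x l) volume :=
    ContinuousOn.integrableOn_compact hcompact
      ((hf.continuousOn).mono (Set.Subset.trans hcell hSΩ))
  have hmapsTo : Set.MapsTo (fun ξ => ξ + v) (Dsq x l) Ω := by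
    intro ξ hξ
    exact hSΩ (hcell' (mem_Dsq_translate.2 hξ))
  have hifv : IntegrableOn (fun ξ => f (ξ + v)) (Dsq x l) volume := by
    apply ContinuousOn.integrableOn_compact hcompact
    exact (hf.continuousOn).comp ((continuous_id.add continuous_const).continuousOn) hmapsTo
  have hvolt : volume (Dsq x l) < ⊤ := vol_Dsq_lt_top x l
  have hconst : IntegrableOn (fun _ : ℝ × ℝ => (fderiv ℝ f x) v) (Dsq x l) volume :=
    integrableOn_const hvolt.ne
  have hvolr : (volume (Dsq x l)).toReal = l^2 := vol_Dsq_toReal hl.le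
  -- key identity
  have key2 : u f m ((a:ℤ)+q.1) ((b:ℤ)+q.2) - u f m (a:ℤ) (b:ℤ) - (fderiv ℝ f x) v
      = (1/l^2) * ∫ ξ in Dsq x l, (f (ξ + v) - f ξ - (fderiv ℝ f x) v) := by
    have e3 : ∫ ξ in Dsq x l, (f (ξ + v) - f ξ - (fderiv ℝ f x) v)
        = (∫ ξ in Dsq x l, (f (ξ + v) - f ξ)) - ∫ _ in Dsq x l, (fderiv ℝ f x) v :=
      integral_sub (hifv.sub hif) hconst
    have e4 : ∫ ξ in Dsq x l, (f (ξ + v) - f ξ)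
        = (∫ ξ in Dsq x l, f (ξ + v)) - ∫ ξ in Dsq x l, f ξ :=
      integral_sub hifv hif
    rw [e3, e4, setIntegral_const, measureReal_def, hvolr, smul_eq_mul]
    unfold u Iavg
    rw [hctr', integral_translate]
    rw [← hxdef, ← hldef]
    field_simp
  rw [key2]
  have hbd : ‖∫ ξ in Dsq x l, (f (ξ + v) - f ξ - (fderiv ℝ f x) v)‖
      ≤ C * (R * l) * (volume (Dsq x l)).toReal :=
    norm_setIntegral_le_of_norm_le_const hvolt P
  rw [hvolr] at hbd
  rw [abs_mul]
  have h1l : |1/l^2| = 1/l^2 := abs_of_pos (by positivity)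
  rw [h1l]
  calc (1/l^2) * |∫ ξ in Dsq x l, (f (ξ + v) - f ξ - (fderiv ℝ f x) v)|
      ≤ (1/l^2) * (C * (R * l) * l^2) := by
        apply mul_le_mul_of_nonneg_left hbd (by positivity)
    _ = C * (R * l) := by field_simp




lemma Qp_expand {p : ℤ × ℤ} (h1 : 0 ≤ p.1) (h12 : p.1 ≤ p.2) (h2 : p.2 ≠ 0)
    (A B Cc D : ℝ) :
    ∑ q ∈ Qp p, ((q.1:ℝ) * A + (q.2:ℝ) * B) * ((q.1:ℝ) * Cc + (q.2:ℝ) * D)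
      = 4 * cP p * ((p.1:ℝ)^2 + (p.2:ℝ)^2) * (A * Cc + B * D) := by
  obtain ⟨a, b⟩ := p
  simp only at h1 h12 h2 ⊢
  by_cases ha0 : a = 0
  · subst ha0
    have hb : 0 < b := lt_of_le_of_ne h12 (Ne.symm h2)
    have hQ : Qp (0, b) = {((0:ℤ), b), (0, -b), (b, 0), (-b, 0)} := by
      ext q
      simp only [Qp, Finset.mem_insert, Finset.mem_singleton, Prod.ext_iff]
      omega
    have hc : cP ((0:ℤ), b) = 1/2 := by simp [cP, h2]
    rw [hQ, hc]
    rw [Finset.sum_insert (by simp only [Finset.mem_insert, Finset.mem_singleton, Prod.ext_iff]; omega),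
      Finset.sum_insert (by simp only [Finset.mem_insert, Finset.mem_singleton, Prod.ext_iff]; omega),
      Finset.sum_insert (by simp only [Finset.mem_singleton, Prod.ext_iff]; omega),
      Finset.sum_singleton]
    push_cast
    ring
  · by_cases hab : a = b
    · subst hab
      have hQ : Qp (a, a) = {(a, a), (a, -a), (-a, a), (-a, -a)} := by
        ext q
        simp only [Qp, Finset.mem_insert, Finset.mem_singleton, Prod.ext_iff]
        omega
      have hc : cP (a, a) = 1/2 := by simp [cP, ha0]
      rw [hQ, hc]
      rw [Finset.sum_insert (by simp only [Finset.mem_insert, Finset.mem_singleton, Prod.ext_iff]; omega),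
        Finset.sum_insert (by simp only [Finset.mem_insert, Finset.mem_singleton, Prod.ext_iff]; omega),
        Finset.sum_insert (by simp only [Finset.mem_singleton, Prod.ext_iff]; omega),
        Finset.sum_singleton]
      push_cast
      ring
    · have hQ : Qp (a, b) = {(a, b), (a, -b), (-a, b), (-a, -b), (b, a), (b, -a), (-b, a), (-b, -a)} := rfl
      have hc : cP (a, b) = 1 := by
        simp only [cP]
        rw [if_neg (by simp; omega), if_neg (by simp; omega)]
      rw [hQ, hc]
      rw [Finset.sum_insert (by simp only [Finset.mem_insert, Finset.mem_singleton, Prod.ext_iff]; omega),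
        Finset.sum_insert (by simp only [Finset.mem_insert, Finset.mem_singleton, Prod.ext_iff]; omega),
        Finset.sum_insert (by simp only [Finset.mem_insert, Finset.mem_singleton, Prod.ext_iff]; omega),
        Finset.sum_insert (by simp only [Finset.mem_insert, Finset.mem_singleton, Prod.ext_iff]; omega),
        Finset.sum_insert (by simp only [Finset.mem_insert, Finset.mem_singleton, Prod.ext_iff]; omega),
        Finset.sum_insert (by simp only [Finset.mem_insert, Finset.mem_singleton, Prod.ext_iff]; omega),
        Finset.sum_insert (by simp only [Finset.mem_singleton, Prod.ext_iff]; omega),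
        Finset.sum_singleton]
      push_cast
      ring

lemma count_bad (n : ℕ) (q : ℤ) :
    ((Finset.range n).filter (fun a : ℕ => ¬(0 ≤ (a:ℤ) + q ∧ (a:ℤ) + q < ((n:ℕ):ℤ)))).card
      ≤ q.natAbs := by
  rw [← Finset.card_range q.natAbs]
  apply Finset.card_le_card_of_injOn (fun a => if 0 ≤ q then a - (n - q.natAbs) else a)
  · intro a ha
    simp only [Finset.mem_coe, Finset.mem_filter, Finset.mem_range] at ha
    simp only [Finset.mem_coe, Finset.mem_range]
    split_ifs with hq <;> omega
  · intro a ha b hb hab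
    simp only [Finset.coe_filter, Finset.mem_range, Set.mem_setOf_eq] at ha hb
    dsimp only at hab
    split_ifs at hab <;> omega

lemma ite_bad_split {c : ℝ} (hc : 0 ≤ c) (P Q : Prop) [Decidable P] [Decidable Q] :
    (if ¬(P ∧ Q) then c else 0) ≤ (if ¬P then c else 0) + (if ¬Q then c else 0) := by
  by_cases hP : P <;> by_cases hQ : Q <;> simp [hP, hQ] <;> linarith

lemma sum_ite_filter_card {α : Type*} (s : Finset α) (P : α → Prop) [DecidablePred P] (c : ℝ) :
    (∑ a ∈ s, if P a then c else 0) = (s.filter P).card * c := by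
  rw [← Finset.sum_filter]
  rw [Finset.sum_const, nsmul_eq_mul]

lemma bad_sum_bound (n : ℕ) (q1 q2 : ℤ) {c : ℝ} (hc : 0 ≤ c) :
    (∑ a ∈ Finset.range n, ∑ b ∈ Finset.range n,
      if ¬((0 ≤ (a:ℤ) + q1 ∧ (a:ℤ) + q1 < ((n:ℕ):ℤ)) ∧ (0 ≤ (b:ℤ) + q2 ∧ (b:ℤ) + q2 < ((n:ℕ):ℤ)))
        then c else 0)
      ≤ ((q1.natAbs + q2.natAbs) * n : ℕ) * c := by
  classical
  have step1 : (∑ a ∈ Finset.range n, ∑ b ∈ Finset.range n,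
      if ¬((0 ≤ (a:ℤ) + q1 ∧ (a:ℤ) + q1 < ((n:ℕ):ℤ)) ∧ (0 ≤ (b:ℤ) + q2 ∧ (b:ℤ) + q2 < ((n:ℕ):ℤ)))
        then c else 0)
      ≤ ∑ a ∈ Finset.range n, ∑ b ∈ Finset.range n,
        ((if ¬(0 ≤ (a:ℤ) + q1 ∧ (a:ℤ) + q1 < ((n:ℕ):ℤ)) then c else 0)
          + (if ¬(0 ≤ (b:ℤ) + q2 ∧ (b:ℤ) + q2 < ((n:ℕ):ℤ)) then c else 0)) := by
    apply Finset.sum_le_sum; intro a _; apply Finset.sum_le_sum; intro b _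
    exact ite_bad_split hc _ _
  apply le_trans step1
  have e2 : ∀ a ∈ Finset.range n, (∑ b ∈ Finset.range n,
      ((if ¬(0 ≤ (a:ℤ) + q1 ∧ (a:ℤ) + q1 < ((n:ℕ):ℤ)) then c else 0)
        + (if ¬(0 ≤ (b:ℤ) + q2 ∧ (b:ℤ) + q2 < ((n:ℕ):ℤ)) then c else 0)))
      = n * (if ¬(0 ≤ (a:ℤ) + q1 ∧ (a:ℤ) + q1 < ((n:ℕ):ℤ)) then c else 0)
        + ((Finset.range n).filter (fun b : ℕ => ¬(0 ≤ (b:ℤ) + q2 ∧ (b:ℤ) + q2 < ((n:ℕ):ℤ)))).card * c := by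
    intro a _
    rw [Finset.sum_add_distrib, Finset.sum_const, Finset.card_range, nsmul_eq_mul,
      sum_ite_filter_card]
  rw [Finset.sum_congr rfl e2, Finset.sum_add_distrib, Finset.sum_const, Finset.card_range,
    ← Finset.mul_sum, sum_ite_filter_card, nsmul_eq_mul]
  have b1 := count_bad n q1
  have b2 := count_bad n q2
  have hb1 : (((Finset.range n).filter (fun a : ℕ => ¬(0 ≤ (a:ℤ) + q1 ∧ (a:ℤ) + q1 < ((n:ℕ):ℤ)))).card : ℝ) * c ≤ (q1.natAbs : ℝ) * c := by
    apply mul_le_mul_of_nonneg_right _ hc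
    exact_mod_cast b1
  have hb2 : (((Finset.range n).filter (fun b : ℕ => ¬(0 ≤ (b:ℤ) + q2 ∧ (b:ℤ) + q2 < ((n:ℕ):ℤ)))).card : ℝ) * c ≤ (q2.natAbs : ℝ) * c := by
    apply mul_le_mul_of_nonneg_right _ hc
    exact_mod_cast b2
  push_cast
  push_cast at hb1 hb2
  nlinarith [Nat.cast_nonneg (α := ℝ) n, hc]





def V (f g : ℝ × ℝ → ℝ) (m : ℕ) (q : ℤ × ℤ) : ℝ :=
  ∑ a ∈ Finset.range (2^m), ∑ b ∈ Finset.range (2^m),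
    if (0 ≤ (a:ℤ) + q.1 ∧ (a:ℤ) + q.1 < ((2^m : ℕ) : ℤ)) ∧
        (0 ≤ (b:ℤ) + q.2 ∧ (b:ℤ) + q.2 < ((2^m : ℕ) : ℤ)) then
      (u f m ((a:ℤ)+q.1) ((b:ℤ)+q.2) - u f m a b) * (u g m ((a:ℤ)+q.1) ((b:ℤ)+q.2) - u g m a b)
    else 0

lemma Bav_eq (f : ℝ × ℝ → ℝ) {m : ℕ} (w : Fin m → Fin 4) :
    Bav f w = u f m (Aw w) (Bw w) := by
  unfold Bav u
  rw [cellCtr_eq]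
  rfl

lemma ctr_aux (m : ℕ) (x y c : ℝ) :
    (x + 1/2) * ll m = (y + 1/2) * ll m + c * ll m ↔ x = y + c := by
  constructor
  · intro h
    have h2 : (x + 1/2) * ll m = ((y + c) + 1/2) * ll m := by linear_combination h
    have := mul_right_cancel₀ (ll_pos m).ne' h2
    linarith
  · intro h; rw [h]; ring

lemma ctr_cond_iff (m : ℕ) (q : ℤ × ℤ) (a b : ℕ) (a' b' : ℕ) :
    ((ctr m a' b').1 = (ctr m a b).1 + (q.1:ℝ) * ll m ∧
      (ctr m a' b').2 = (ctr m a b).2 + (q.2:ℝ) * ll m)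
    ↔ ((a':ℤ) = (a:ℤ) + q.1 ∧ (b':ℤ) = (b:ℤ) + q.2) := by
  unfold ctr
  simp only []
  rw [ctr_aux, ctr_aux]
  constructor
  · rintro ⟨e1, e2⟩
    exact ⟨by exact_mod_cast e1, by exact_mod_cast e2⟩
  · rintro ⟨e1, e2⟩
    exact ⟨by exact_mod_cast e1, by exact_mod_cast e2⟩

lemma inner_collapse (f g : ℝ × ℝ → ℝ) (m : ℕ) (q : ℤ × ℤ) (a b : ℕ) :
    (∑ a' ∈ Finset.range (2^m), ∑ b' ∈ Finset.range (2^m),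
      if ((ctr m a' b').1 = (ctr m a b).1 + (q.1:ℝ) * ll m ∧
          (ctr m a' b').2 = (ctr m a b).2 + (q.2:ℝ) * ll m) then
        (u f m a' b' - u f m a b) * (u g m a' b' - u g m a b) else 0)
    = if (0 ≤ (a:ℤ) + q.1 ∧ (a:ℤ) + q.1 < ((2^m : ℕ) : ℤ)) ∧
        (0 ≤ (b:ℤ) + q.2 ∧ (b:ℤ) + q.2 < ((2^m : ℕ) : ℤ)) then
      (u f m ((a:ℤ)+q.1) ((b:ℤ)+q.2) - u f m a b) * (u g m ((a:ℤ)+q.1) ((b:ℤ)+q.2) - u g m a b)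
    else 0 := by
  classical
  have step1 : ∀ a' b' : ℕ,
      (if ((ctr m a' b').1 = (ctr m a b).1 + (q.1:ℝ) * ll m ∧
          (ctr m a' b').2 = (ctr m a b).2 + (q.2:ℝ) * ll m) then
        (u f m a' b' - u f m a b) * (u g m a' b' - u g m a b) else 0)
      = (if (a':ℤ) = (a:ℤ) + q.1 then
          (if (b':ℤ) = (b:ℤ) + q.2 then
            (u f m a' b' - u f m a b) * (u g m a' b' - u g m a b) else 0) else 0) := by
    intro a' b'
    rw [if_congr (ctr_cond_iff m q a b a' b') rfl rfl, ite_and]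
  calc (∑ a' ∈ Finset.range (2^m), ∑ b' ∈ Finset.range (2^m),
      if ((ctr m a' b').1 = (ctr m a b).1 + (q.1:ℝ) * ll m ∧
          (ctr m a' b').2 = (ctr m a b).2 + (q.2:ℝ) * ll m) then
        (u f m a' b' - u f m a b) * (u g m a' b' - u g m a b) else 0)
      = ∑ a' ∈ Finset.range (2^m),
          if (a':ℤ) = (a:ℤ) + q.1 then
            (∑ b' ∈ Finset.range (2^m), if (b':ℤ) = (b:ℤ) + q.2 then
              (u f m a' b' - u f m a b) * (u g m a' b' - u g m a b) else 0) else 0 := by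
        apply Finset.sum_congr rfl
        intro a' _
        rw [← sum_ite_pull]
        exact Finset.sum_congr rfl fun b' _ => step1 a' b'
    _ = ∑ a' ∈ Finset.range (2^m),
          if (a':ℤ) = (a:ℤ) + q.1 then
            (if 0 ≤ (b:ℤ) + q.2 ∧ (b:ℤ) + q.2 < ((2^m : ℕ) : ℤ) then
              (u f m a' ((b:ℤ)+q.2) - u f m a b) * (u g m a' ((b:ℤ)+q.2) - u g m a b) else 0)
          else 0 := by
        apply Finset.sum_congr rfl
        intro a' _
        congr 1
        exact sum_range_ite (2^m) ((b:ℤ)+q.2)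
          (fun c => (u f m a' c - u f m a b) * (u g m a' c - u g m a b))
    _ = if 0 ≤ (a:ℤ) + q.1 ∧ (a:ℤ) + q.1 < ((2^m : ℕ) : ℤ) then
          (if 0 ≤ (b:ℤ) + q.2 ∧ (b:ℤ) + q.2 < ((2^m : ℕ) : ℤ) then
            (u f m ((a:ℤ)+q.1) ((b:ℤ)+q.2) - u f m a b) * (u g m ((a:ℤ)+q.1) ((b:ℤ)+q.2) - u g m a b)
          else 0) else 0 := by
        exact sum_range_ite (2^m) ((a:ℤ)+q.1)
          (fun c => if 0 ≤ (b:ℤ) + q.2 ∧ (b:ℤ) + q.2 < ((2^m : ℕ) : ℤ) then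
            (u f m c ((b:ℤ)+q.2) - u f m a b) * (u g m c ((b:ℤ)+q.2) - u g m a b) else 0)
    _ = _ := by rw [← ite_and]

lemma sum_reindex2 {m : ℕ} (G : ℕ × ℕ → ℕ × ℕ → ℝ) :
    ∑ w : Fin m → Fin 4, ∑ w' : Fin m → Fin 4, G (Aw w, Bw w) (Aw w', Bw w')
      = ∑ a ∈ Finset.range (2^m), ∑ b ∈ Finset.range (2^m),
        ∑ a' ∈ Finset.range (2^m), ∑ b' ∈ Finset.range (2^m), G (a,b) (a',b') :=
  calc ∑ w : Fin m → Fin 4, ∑ w' : Fin m → Fin 4, G (Aw w, Bw w) (Aw w', Bw w')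
      = ∑ w : Fin m → Fin 4, ∑ a' ∈ Finset.range (2^m), ∑ b' ∈ Finset.range (2^m),
          G (Aw w, Bw w) (a', b') :=
        Finset.sum_congr rfl fun w _ => sum_reindex _
    _ = _ := sum_reindex (fun x => ∑ a' ∈ Finset.range (2^m), ∑ b' ∈ Finset.range (2^m),
          G x (a', b'))

lemma Em_eq (P : Finset (ℤ × ℤ)) (hP : ∀ p ∈ P, 0 ≤ p.1 ∧ p.1 ≤ p.2 ∧ p.2 ≠ 0)
    (A : ℤ × ℤ → ℝ) (f g : ℝ × ℝ → ℝ) (m : ℕ) :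
    Em P A f g m
      = (((1 / 2) * (∑ p ∈ P, ((p.1 : ℝ) ^ 2 + (p.2 : ℝ) ^ 2) * cP p * A p)⁻¹) / 2) *
        ∑ p ∈ P, A p * ∑ q ∈ Qp p, V f g m q := by
  unfold Em
  congr 1
  apply Finset.sum_congr rfl
  intro p hp
  congr 1
  obtain ⟨h1, h12, h2⟩ := hP p hp
  have h2' : 0 ≤ p.2 := le_trans h1 h12
  have hl : 0 < ll m := ll_pos m
  have stepA : ∀ w w' : Fin m → Fin 4,
      (if isNbr p ((1/2)^m) (cellCtr w) (cellCtr w') then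
         (Bav f w' - Bav f w) * (Bav g w' - Bav g w) else 0)
      = ∑ q ∈ Qp p, (if ((cellCtr w').1 = (cellCtr w).1 + (q.1:ℝ) * ll m ∧
            (cellCtr w').2 = (cellCtr w).2 + (q.2:ℝ) * ll m) then
          (Bav f w' - Bav f w) * (Bav g w' - Bav g w) else 0) := by
    intro w w'
    show (if isNbr p (ll m) (cellCtr w) (cellCtr w') then
         (Bav f w' - Bav f w) * (Bav g w' - Bav g w) else 0) = _
    by_cases h : isNbr p (ll m) (cellCtr w) (cellCtr w')
    · obtain ⟨q₀, hq₀, e⟩ := (isNbr_iff h1 h2' hl _ _).1 h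
      rw [if_pos h, Finset.sum_eq_single q₀]
      · rw [if_pos e]
      · intro q hq hne
        rw [if_neg]
        rintro ⟨e1', e2'⟩
        apply hne
        have c1 : (q.1:ℝ) * ll m = (q₀.1:ℝ) * ll m := by linarith [e.1]
        have c2 : (q.2:ℝ) * ll m = (q₀.2:ℝ) * ll m := by linarith [e.2]
        have d1 : (q.1:ℝ) = q₀.1 := mul_right_cancel₀ hl.ne' c1
        have d2 : (q.2:ℝ) = q₀.2 := mul_right_cancel₀ hl.ne' c2
        exact Prod.ext (by exact_mod_cast d1) (by exact_mod_cast d2)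
      · intro hq; exact absurd hq₀ hq
    · rw [if_neg h]
      symm
      apply Finset.sum_eq_zero
      intro q hq
      rw [if_neg]
      intro e
      exact h ((isNbr_iff h1 h2' hl _ _).2 ⟨q, hq, e⟩)
  calc (∑ w : Fin m → Fin 4, ∑ w' : Fin m → Fin 4,
        if isNbr p ((1/2)^m) (cellCtr w) (cellCtr w') then
          (Bav f w' - Bav f w) * (Bav g w' - Bav g w) else 0)
      = ∑ w : Fin m → Fin 4, ∑ w' : Fin m → Fin 4, ∑ q ∈ Qp p,
          (if ((cellCtr w').1 = (cellCtr w).1 + (q.1:ℝ) * ll m ∧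
              (cellCtr w').2 = (cellCtr w).2 + (q.2:ℝ) * ll m) then
            (Bav f w' - Bav f w) * (Bav g w' - Bav g w) else 0) :=
        Finset.sum_congr rfl fun w _ => Finset.sum_congr rfl fun w' _ => stepA w w'
    _ = ∑ w : Fin m → Fin 4, ∑ q ∈ Qp p, ∑ w' : Fin m → Fin 4,
          (if ((cellCtr w').1 = (cellCtr w).1 + (q.1:ℝ) * ll m ∧
              (cellCtr w').2 = (cellCtr w).2 + (q.2:ℝ) * ll m) then
            (Bav f w' - Bav f w) * (Bav g w' - Bav g w) else 0) :=
        Finset.sum_congr rfl fun w _ => Finset.sum_comm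
    _ = ∑ q ∈ Qp p, ∑ w : Fin m → Fin 4, ∑ w' : Fin m → Fin 4,
          (if ((cellCtr w').1 = (cellCtr w).1 + (q.1:ℝ) * ll m ∧
              (cellCtr w').2 = (cellCtr w).2 + (q.2:ℝ) * ll m) then
            (Bav f w' - Bav f w) * (Bav g w' - Bav g w) else 0) :=
        Finset.sum_comm
    _ = ∑ q ∈ Qp p, V f g m q := by
        apply Finset.sum_congr rfl
        intro q _
        simp only [Bav_eq, cellCtr_eq]
        calc (∑ w : Fin m → Fin 4, ∑ w' : Fin m → Fin 4,
              if ((ctr m (Aw w') (Bw w')).1 = (ctr m (Aw w) (Bw w)).1 + (q.1:ℝ) * ll m ∧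
                  (ctr m (Aw w') (Bw w')).2 = (ctr m (Aw w) (Bw w)).2 + (q.2:ℝ) * ll m) then
                (u f m (Aw w') (Bw w') - u f m (Aw w) (Bw w)) *
                  (u g m (Aw w') (Bw w') - u g m (Aw w) (Bw w)) else 0)
            = ∑ a ∈ Finset.range (2^m), ∑ b ∈ Finset.range (2^m),
              ∑ a' ∈ Finset.range (2^m), ∑ b' ∈ Finset.range (2^m),
              (if ((ctr m a' b').1 = (ctr m a b).1 + (q.1:ℝ) * ll m ∧
                  (ctr m a' b').2 = (ctr m a b).2 + (q.2:ℝ) * ll m) then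
                (u f m a' b' - u f m a b) * (u g m a' b' - u g m a b) else 0) :=
              sum_reindex2 (fun x y =>
                if ((ctr m y.1 y.2).1 = (ctr m x.1 x.2).1 + (q.1:ℝ) * ll m ∧
                    (ctr m y.1 y.2).2 = (ctr m x.1 x.2).2 + (q.2:ℝ) * ll m) then
                  (u f m y.1 y.2 - u f m x.1 x.2) * (u g m y.1 y.2 - u g m x.1 x.2) else 0)
          _ = V f g m q := by
              unfold V
              exact Finset.sum_congr rfl fun a _ => Finset.sum_congr rfl fun b _ =>
                inner_collapse f g m q a b



def Hq (f g : ℝ × ℝ → ℝ) (q : ℤ × ℤ) (x : ℝ × ℝ) : ℝ :=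
  ((q.1:ℝ) * pd1 f x + (q.2:ℝ) * pd2 f x) * ((q.1:ℝ) * pd1 g x + (q.2:ℝ) * pd2 g x)

lemma pd1_contOn {f : ℝ × ℝ → ℝ} {Ω : Set (ℝ × ℝ)} (hΩ : IsOpen Ω)
    (hf : ContDiffOn ℝ 1 f Ω) : ContinuousOn (pd1 f) Ω :=
  (hf.continuousOn_fderiv_of_isOpen hΩ le_rfl).clm_apply continuousOn_const

lemma pd2_contOn {f : ℝ × ℝ → ℝ} {Ω : Set (ℝ × ℝ)} (hΩ : IsOpen Ω)
    (hf : ContDiffOn ℝ 1 f Ω) : ContinuousOn (pd2 f) Ω :=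
  (hf.continuousOn_fderiv_of_isOpen hΩ le_rfl).clm_apply continuousOn_const

lemma Hq_contOn {f g : ℝ × ℝ → ℝ} {Ω : Set (ℝ × ℝ)} (hΩ : IsOpen Ω) (hSΩ : SQ ⊆ Ω)
    (hf : ContDiffOn ℝ 1 f Ω) (hg : ContDiffOn ℝ 1 g Ω) (q : ℤ × ℤ) :
    ContinuousOn (Hq f g q) SQ :=
  ((continuousOn_const.mul ((pd1_contOn hΩ hf).mono hSΩ)).add
    (continuousOn_const.mul ((pd2_contOn hΩ hf).mono hSΩ))).mul
   ((continuousOn_const.mul ((pd1_contOn hΩ hg).mono hSΩ)).add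
    (continuousOn_const.mul ((pd2_contOn hΩ hg).mono hSΩ)))

lemma pd_bound {f : ℝ × ℝ → ℝ} {K : ℝ} (hK : ∀ x ∈ SQ, ‖fderiv ℝ f x‖ ≤ K)
    (x : ℝ × ℝ) (hx : x ∈ SQ) : |pd1 f x| ≤ K ∧ |pd2 f x| ≤ K := by
  have h1 : ‖((1:ℝ), (0:ℝ))‖ ≤ 1 := by rw [Prod.norm_def]; simp
  have h2 : ‖((0:ℝ), (1:ℝ))‖ ≤ 1 := by rw [Prod.norm_def]; simp
  have hKnn : 0 ≤ K := le_trans (norm_nonneg _) (hK x hx)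
  constructor
  · rw [← Real.norm_eq_abs]
    unfold pd1
    calc ‖(fderiv ℝ f x) (1, 0)‖ ≤ ‖fderiv ℝ f x‖ * ‖((1:ℝ), (0:ℝ))‖ :=
          (fderiv ℝ f x).le_opNorm _
      _ ≤ K * 1 := mul_le_mul (hK x hx) h1 (norm_nonneg _) hKnn
      _ = K := mul_one K
  · rw [← Real.norm_eq_abs]
    unfold pd2
    calc ‖(fderiv ℝ f x) (0, 1)‖ ≤ ‖fderiv ℝ f x‖ * ‖((0:ℝ), (1:ℝ))‖ :=
          (fderiv ℝ f x).le_opNorm _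
      _ ≤ K * 1 := mul_le_mul (hK x hx) h2 (norm_nonneg _) hKnn
      _ = K := mul_one K

lemma nat_cast_nl (m : ℕ) : ((2^m : ℕ) : ℝ) * ll m = 1 := by
  push_cast
  exact hk m

lemma unif_fderiv {f : ℝ × ℝ → ℝ} {Ω : Set (ℝ × ℝ)} (hΩ : IsOpen Ω) (hSΩ : SQ ⊆ Ω)
    (hf : ContDiffOn ℝ 1 f Ω) {ε' : ℝ} (hε' : 0 < ε') :
    ∃ δ > 0, ∀ z ∈ SQ, ∀ w ∈ SQ, dist z w < δ → ‖fderiv ℝ f z - fderiv ℝ f w‖ ≤ ε' := by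
  obtain ⟨δ, hδ0, hδ⟩ := (Metric.uniformContinuousOn_iff).1
    (SQ_compact.uniformContinuousOn_of_continuous
      ((hf.continuousOn_fderiv_of_isOpen hΩ le_rfl).mono hSΩ)) ε' hε'
  refine ⟨δ, hδ0, fun z hz w hw hd => ?_⟩
  have := hδ z hz w hw hd
  rw [dist_eq_norm] at this
  exact this.le

lemma abs_double_sum_le {n : ℕ} (F G : ℕ → ℕ → ℝ)
    (h : ∀ a ∈ Finset.range n, ∀ b ∈ Finset.range n, |F a b| ≤ G a b) :
    |∑ a ∈ Finset.range n, ∑ b ∈ Finset.range n, F a b|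
      ≤ ∑ a ∈ Finset.range n, ∑ b ∈ Finset.range n, G a b :=
  le_trans (Finset.abs_sum_le_sum_abs _ _) (Finset.sum_le_sum fun a ha =>
    le_trans (Finset.abs_sum_le_sum_abs _ _) (Finset.sum_le_sum (h a ha)))

set_option maxHeartbeats 2000000

lemma V_tendsto {f g : ℝ × ℝ → ℝ} {Ω : Set (ℝ × ℝ)} (hΩ : IsOpen Ω) (hSΩ : SQ ⊆ Ω)
    (hf : ContDiffOn ℝ 1 f Ω) (hg : ContDiffOn ℝ 1 g Ω) (q : ℤ × ℤ) :
    Tendsto (fun m => V f g m q) atTop (𝓝 (∫ ξ in SQ, Hq f g q ξ)) := by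
  have hW := riemann (Hq f g q) (Hq_contOn hΩ hSΩ hf hg q)
  have hVW : Tendsto (fun m => V f g m q - ∑ a ∈ Finset.range (2^m),
      ∑ b ∈ Finset.range (2^m), (ll m)^2 * Hq f g q (ctr m a b)) atTop (𝓝 0) := by
    rw [Metric.tendsto_atTop]
    intro ε hε
    -- constants
    obtain ⟨K0f, hK0f⟩ := SQ_compact.exists_bound_of_continuousOn
      ((hf.continuousOn_fderiv_of_isOpen hΩ le_rfl).mono hSΩ)
    obtain ⟨K0g, hK0g⟩ := SQ_compact.exists_bound_of_continuousOn
      ((hg.continuousOn_fderiv_of_isOpen hΩ le_rfl).mono hSΩ)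
    have h00 : ((0:ℝ), (0:ℝ)) ∈ SQ := by
      constructor <;> constructor <;> norm_num
    set K := max K0f K0g + 1 with hKdef
    have hK1 : 1 ≤ K := by
      have : (0:ℝ) ≤ K0f := le_trans (norm_nonneg _) (hK0f _ h00)
      have h2 : K0f ≤ max K0f K0g := le_max_left _ _
      simp only [hKdef]
      linarith
    have hK0 : 0 < K := lt_of_lt_of_le one_pos hK1
    have hKf : ∀ x ∈ SQ, ‖fderiv ℝ f x‖ ≤ K := fun x hx =>
      le_trans (hK0f x hx) (by simp only [hKdef]; linarith [le_max_left K0f K0g])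
    have hKg : ∀ x ∈ SQ, ‖fderiv ℝ g x‖ ≤ K := fun x hx =>
      le_trans (hK0g x hx) (by simp only [hKdef]; linarith [le_max_right K0f K0g])
    set R := max |(q.1:ℝ)| |(q.2:ℝ)| + 1 with hRdef
    have hRmax : (0:ℝ) ≤ max |(q.1:ℝ)| |(q.2:ℝ)| := le_max_of_le_left (abs_nonneg _)
    have hR1 : 1 ≤ R := by simp only [hRdef]; linarith
    have hR0 : 0 < R := lt_of_lt_of_le one_pos hR1
    have hq1R : |(q.1:ℝ)| ≤ R := by
      have := le_max_left |(q.1:ℝ)| |(q.2:ℝ)|; simp only [hRdef]; linarith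
    have hq2R : |(q.2:ℝ)| ≤ R := by
      have := le_max_right |(q.1:ℝ)| |(q.2:ℝ)|; simp only [hRdef]; linarith
    have hq1Rn : ((q.1.natAbs : ℕ) : ℝ) ≤ R := by
      rw [Nat.cast_natAbs, Int.cast_abs]; exact hq1R
    have hq2Rn : ((q.2.natAbs : ℕ) : ℝ) ≤ R := by
      rw [Nat.cast_natAbs, Int.cast_abs]; exact hq2R
    set ε' := min ((ε/2) / ((2*K+1) * R^2)) 1 with hε'def
    have hε'pos : 0 < ε' := lt_min (by positivity) one_pos
    have hε'le1 : ε' ≤ 1 := min_le_right _ _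
    have hε'le : ε' ≤ (ε/2) / ((2*K+1) * R^2) := min_le_left _ _
    obtain ⟨δf, hδf0, hδf⟩ := unif_fderiv hΩ hSΩ hf hε'pos
    obtain ⟨δg, hδg0, hδg⟩ := unif_fderiv hΩ hSΩ hg hε'pos
    set δ := min δf δg with hδdef
    have hδ0 : 0 < δ := lt_min hδf0 hδg0
    have hδCf : ∀ z ∈ SQ, ∀ w ∈ SQ, dist z w < δ → ‖fderiv ℝ f z - fderiv ℝ f w‖ ≤ ε' :=
      fun z hz w hw hd => hδf z hz w hw (lt_of_lt_of_le hd (min_le_left _ _))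
    have hδCg : ∀ z ∈ SQ, ∀ w ∈ SQ, dist z w < δ → ‖fderiv ℝ g z - fderiv ℝ g w‖ ≤ ε' :=
      fun z hz w hw hd => hδg z hz w hw (lt_of_lt_of_le hd (min_le_right _ _))
    have hll0 : Tendsto ll atTop (𝓝 (0:ℝ)) :=
      tendsto_pow_atTop_nhds_zero_of_lt_one (by norm_num) (by norm_num)
    have hev1 : ∀ᶠ m in atTop, (R+1) * ll m < δ := by
      have hc : (0:ℝ) < δ / (R+1) := by positivity
      filter_upwards [hll0.eventually (gt_mem_nhds hc)] with m hm
      rw [lt_div_iff₀ (by positivity)] at hm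
      linarith [hm]
    have hev2 : ∀ᶠ m in atTop, 8 * R^3 * K^2 * ll m < ε/2 := by
      have hc : (0:ℝ) < (ε/2) / (8 * R^3 * K^2) := by positivity
      filter_upwards [hll0.eventually (gt_mem_nhds hc)] with m hm
      rw [lt_div_iff₀ (by positivity)] at hm
      linarith [hm]
    obtain ⟨N, hN⟩ := Filter.eventually_atTop.1 (hev1.and hev2)
    refine ⟨N, fun m hm => ?_⟩
    obtain ⟨hm1, hm2⟩ := hN m hm
    have hl := ll_pos m
    rw [Real.dist_eq, sub_zero]
    -- pointwise bound
    have hpoint : ∀ a ∈ Finset.range (2^m), ∀ b ∈ Finset.range (2^m),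
        |(if (0 ≤ (a:ℤ) + q.1 ∧ (a:ℤ) + q.1 < ((2^m : ℕ) : ℤ)) ∧
            (0 ≤ (b:ℤ) + q.2 ∧ (b:ℤ) + q.2 < ((2^m : ℕ) : ℤ)) then
          (u f m ((a:ℤ)+q.1) ((b:ℤ)+q.2) - u f m a b) *
            (u g m ((a:ℤ)+q.1) ((b:ℤ)+q.2) - u g m a b) else 0)
          - (ll m)^2 * Hq f g q (ctr m a b)|
        ≤ ε' * (2*K+1) * R^2 * (ll m)^2
          + (if ¬((0 ≤ (a:ℤ) + q.1 ∧ (a:ℤ) + q.1 < ((2^m : ℕ) : ℤ)) ∧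
            (0 ≤ (b:ℤ) + q.2 ∧ (b:ℤ) + q.2 < ((2^m : ℕ) : ℤ))) then
            4*R^2*K^2*(ll m)^2 else 0) := by
      intro a ha b hb
      rw [Finset.mem_range] at ha hb
      have hctrS : ctr m a b ∈ SQ := cell_subset_SQ ha hb (ctr_mem_cell m a b)
      have pdf := pd_bound hKf _ hctrS
      have pdg := pd_bound hKg _ hctrS
      have hHbd : |Hq f g q (ctr m a b)| ≤ 4*R^2*K^2 := by
        unfold Hq
        rw [abs_mul]
        have e1 : |(q.1:ℝ) * pd1 f (ctr m a b) + (q.2:ℝ) * pd2 f (ctr m a b)| ≤ 2*(R*K) := by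
          calc |(q.1:ℝ) * pd1 f (ctr m a b) + (q.2:ℝ) * pd2 f (ctr m a b)|
              ≤ |(q.1:ℝ) * pd1 f (ctr m a b)| + |(q.2:ℝ) * pd2 f (ctr m a b)| := abs_add_le _ _
            _ = |(q.1:ℝ)| * |pd1 f (ctr m a b)| + |(q.2:ℝ)| * |pd2 f (ctr m a b)| := by
                rw [abs_mul, abs_mul]
            _ ≤ R * K + R * K := add_le_add
                (mul_le_mul hq1R pdf.1 (abs_nonneg _) hR0.le)
                (mul_le_mul hq2R pdf.2 (abs_nonneg _) hR0.le)
            _ = 2*(R*K) := by ring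
        have e2 : |(q.1:ℝ) * pd1 g (ctr m a b) + (q.2:ℝ) * pd2 g (ctr m a b)| ≤ 2*(R*K) := by
          calc |(q.1:ℝ) * pd1 g (ctr m a b) + (q.2:ℝ) * pd2 g (ctr m a b)|
              ≤ |(q.1:ℝ) * pd1 g (ctr m a b)| + |(q.2:ℝ) * pd2 g (ctr m a b)| := abs_add_le _ _
            _ = |(q.1:ℝ)| * |pd1 g (ctr m a b)| + |(q.2:ℝ)| * |pd2 g (ctr m a b)| := by
                rw [abs_mul, abs_mul]
            _ ≤ R * K + R * K := add_le_add
                (mul_le_mul hq1R pdg.1 (abs_nonneg _) hR0.le)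
                (mul_le_mul hq2R pdg.2 (abs_nonneg _) hR0.le)
            _ = 2*(R*K) := by ring
        calc |(q.1:ℝ) * pd1 f (ctr m a b) + (q.2:ℝ) * pd2 f (ctr m a b)|
              * |(q.1:ℝ) * pd1 g (ctr m a b) + (q.2:ℝ) * pd2 g (ctr m a b)|
            ≤ (2*(R*K)) * (2*(R*K)) := mul_le_mul e1 e2 (abs_nonneg _) (by positivity)
          _ = 4*R^2*K^2 := by ring
      by_cases hcond : (0 ≤ (a:ℤ) + q.1 ∧ (a:ℤ) + q.1 < ((2^m : ℕ) : ℤ)) ∧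
          (0 ≤ (b:ℤ) + q.2 ∧ (b:ℤ) + q.2 < ((2^m : ℕ) : ℤ))
      · rw [if_pos hcond, if_neg (not_not_intro hcond), add_zero]
        set X := u f m ((a:ℤ)+q.1) ((b:ℤ)+q.2) - u f m a b with hXdef
        set Y := u g m ((a:ℤ)+q.1) ((b:ℤ)+q.2) - u g m a b with hYdef
        set X₀ := (fderiv ℝ f (ctr m (a:ℤ) (b:ℤ))) ((q.1:ℝ) * ll m, (q.2:ℝ) * ll m) with hX₀def
        set Y₀ := (fderiv ℝ g (ctr m (a:ℤ) (b:ℤ))) ((q.1:ℝ) * ll m, (q.2:ℝ) * ll m) with hY₀def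
        have hXd : |X - X₀| ≤ ε' * (R * ll m) :=
          lin_est hΩ hSΩ hf hR0.le hδ0 hε'pos.le hδCf hq1R hq2R ha hb
            hcond.1.1 hcond.1.2 hcond.2.1 hcond.2.2 hm1
        have hYd : |Y - Y₀| ≤ ε' * (R * ll m) :=
          lin_est hΩ hSΩ hg hR0.le hδ0 hε'pos.le hδCg hq1R hq2R ha hb
            hcond.1.1 hcond.1.2 hcond.2.1 hcond.2.2 hm1
        have hX₀bd : |X₀| ≤ K * (R * ll m) := by
          rw [hX₀def, ← Real.norm_eq_abs]
          calc ‖(fderiv ℝ f (ctr m (a:ℤ) (b:ℤ))) ((q.1:ℝ) * ll m, (q.2:ℝ) * ll m)‖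
              ≤ ‖fderiv ℝ f (ctr m (a:ℤ) (b:ℤ))‖ * ‖(((q.1:ℝ) * ll m, (q.2:ℝ) * ll m) : ℝ × ℝ)‖ :=
                (fderiv ℝ f _).le_opNorm _
            _ ≤ K * (R * ll m) := mul_le_mul (hKf _ hctrS) (norm_v_le hq1R hq2R hl.le)
                (norm_nonneg _) hK0.le
        have hY₀bd : |Y₀| ≤ K * (R * ll m) := by
          rw [hY₀def, ← Real.norm_eq_abs]
          calc ‖(fderiv ℝ g (ctr m (a:ℤ) (b:ℤ))) ((q.1:ℝ) * ll m, (q.2:ℝ) * ll m)‖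
              ≤ ‖fderiv ℝ g (ctr m (a:ℤ) (b:ℤ))‖ * ‖(((q.1:ℝ) * ll m, (q.2:ℝ) * ll m) : ℝ × ℝ)‖ :=
                (fderiv ℝ g _).le_opNorm _
            _ ≤ K * (R * ll m) := mul_le_mul (hKg _ hctrS) (norm_v_le hq1R hq2R hl.le)
                (norm_nonneg _) hK0.le
        have hXbd : |X| ≤ (K+1) * (R * ll m) := by
          calc |X| = |X₀ + (X - X₀)| := by ring_nf
            _ ≤ |X₀| + |X - X₀| := abs_add_le _ _
            _ ≤ K * (R * ll m) + ε' * (R * ll m) := add_le_add hX₀bd hXd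
            _ ≤ K * (R * ll m) + 1 * (R * ll m) := by
                have : 0 ≤ R * ll m := by positivity
                nlinarith
            _ = (K+1) * (R * ll m) := by ring
        have hmain : (ll m)^2 * Hq f g q (ctr m a b) = X₀ * Y₀ := by
          rw [hX₀def, hY₀def, fderiv_pd, fderiv_pd]
          unfold Hq
          ring
        rw [hmain]
        calc |X * Y - X₀ * Y₀| = |X * (Y - Y₀) + Y₀ * (X - X₀)| := by ring_nf
          _ ≤ |X * (Y - Y₀)| + |Y₀ * (X - X₀)| := abs_add_le _ _
          _ = |X| * |Y - Y₀| + |Y₀| * |X - X₀| := by rw [abs_mul, abs_mul]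
          _ ≤ ((K+1) * (R * ll m)) * (ε' * (R * ll m))
              + (K * (R * ll m)) * (ε' * (R * ll m)) := add_le_add
              (mul_le_mul hXbd hYd (abs_nonneg _) (by positivity))
              (mul_le_mul hY₀bd hXd (abs_nonneg _) (by positivity))
          _ = ε' * (2*K+1) * R^2 * (ll m)^2 := by ring
      · rw [if_neg hcond, if_pos hcond]
        rw [zero_sub, abs_neg, abs_mul]
        have h4 : |(ll m)^2| = (ll m)^2 := abs_of_pos (by positivity)
        rw [h4]
        have : (ll m)^2 * |Hq f g q (ctr m a b)| ≤ (ll m)^2 * (4*R^2*K^2) :=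
          mul_le_mul_of_nonneg_left hHbd (by positivity)
        have hnn : 0 ≤ ε' * (2*K+1) * R^2 * (ll m)^2 := by positivity
        calc (ll m)^2 * |Hq f g q (ctr m a b)| ≤ (ll m)^2 * (4*R^2*K^2) := this
          _ = 4*R^2*K^2*(ll m)^2 := by ring
          _ ≤ ε' * (2*K+1) * R^2 * (ll m)^2 + 4*R^2*K^2*(ll m)^2 := by linarith
    -- summation
    have hVWeq : V f g m q - ∑ a ∈ Finset.range (2^m), ∑ b ∈ Finset.range (2^m),
        (ll m)^2 * Hq f g q (ctr m a b)
        = ∑ a ∈ Finset.range (2^m), ∑ b ∈ Finset.range (2^m),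
          ((if (0 ≤ (a:ℤ) + q.1 ∧ (a:ℤ) + q.1 < ((2^m : ℕ) : ℤ)) ∧
              (0 ≤ (b:ℤ) + q.2 ∧ (b:ℤ) + q.2 < ((2^m : ℕ) : ℤ)) then
            (u f m ((a:ℤ)+q.1) ((b:ℤ)+q.2) - u f m a b) *
              (u g m ((a:ℤ)+q.1) ((b:ℤ)+q.2) - u g m a b) else 0)
            - (ll m)^2 * Hq f g q (ctr m a b)) := by
      unfold V
      rw [← Finset.sum_sub_distrib]
      exact Finset.sum_congr rfl fun a _ => by rw [← Finset.sum_sub_distrib]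
    rw [hVWeq]
    have habs := abs_double_sum_le _ _ hpoint
    have ed : (∑ a ∈ Finset.range (2^m), ∑ b ∈ Finset.range (2^m),
        (ε' * (2*K+1) * R^2 * (ll m)^2
          + (if ¬((0 ≤ (a:ℤ) + q.1 ∧ (a:ℤ) + q.1 < ((2^m : ℕ) : ℤ)) ∧
            (0 ≤ (b:ℤ) + q.2 ∧ (b:ℤ) + q.2 < ((2^m : ℕ) : ℤ))) then
            4*R^2*K^2*(ll m)^2 else 0)))
        = (∑ _a ∈ Finset.range (2^m), ∑ _b ∈ Finset.range (2^m),
            ε' * (2*K+1) * R^2 * (ll m)^2)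
          + (∑ a ∈ Finset.range (2^m), ∑ b ∈ Finset.range (2^m),
            (if ¬((0 ≤ (a:ℤ) + q.1 ∧ (a:ℤ) + q.1 < ((2^m : ℕ) : ℤ)) ∧
              (0 ≤ (b:ℤ) + q.2 ∧ (b:ℤ) + q.2 < ((2^m : ℕ) : ℤ))) then
              4*R^2*K^2*(ll m)^2 else 0)) := by
      rw [← Finset.sum_add_distrib]
      exact Finset.sum_congr rfl fun a _ => by rw [← Finset.sum_add_distrib]
    have e1 : (∑ _a ∈ Finset.range (2^m), ∑ _b ∈ Finset.range (2^m),
        ε' * (2*K+1) * R^2 * (ll m)^2) = ε' * (2*K+1) * R^2 := by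
      rw [Finset.sum_const, Finset.sum_const, Finset.card_range, nsmul_eq_mul, nsmul_eq_mul]
      linear_combination (ε' * (2*K+1) * R^2) * nl_sq m
    have e2 := bad_sum_bound (2^m) q.1 q.2
      (show (0:ℝ) ≤ 4*R^2*K^2*(ll m)^2 by positivity)
    have e3 : (((q.1.natAbs + q.2.natAbs) * 2^m : ℕ) : ℝ) * (4*R^2*K^2*(ll m)^2)
        ≤ 8 * R^3 * K^2 * ll m := by
      have hnl := nat_cast_nl m
      have hcast : (((q.1.natAbs + q.2.natAbs) * 2^m : ℕ) : ℝ)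
          = ((q.1.natAbs : ℕ):ℝ) * ((2^m : ℕ):ℝ) + ((q.2.natAbs : ℕ):ℝ) * ((2^m : ℕ):ℝ) := by
        push_cast; ring
      rw [hcast]
      have hq12 : ((q.1.natAbs : ℕ):ℝ) + ((q.2.natAbs : ℕ):ℝ) ≤ 2 * R := by linarith
      calc (((q.1.natAbs : ℕ):ℝ) * ((2^m : ℕ):ℝ) + ((q.2.natAbs : ℕ):ℝ) * ((2^m : ℕ):ℝ))
            * (4*R^2*K^2*(ll m)^2)
          = (((q.1.natAbs : ℕ):ℝ) + ((q.2.natAbs : ℕ):ℝ)) * (4*R^2*K^2)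
            * (((2^m : ℕ):ℝ) * ll m) * ll m := by ring
        _ = (((q.1.natAbs : ℕ):ℝ) + ((q.2.natAbs : ℕ):ℝ)) * (4*R^2*K^2) * ll m := by
            rw [hnl]; ring
        _ ≤ (2*R) * (4*R^2*K^2) * ll m := by
            apply mul_le_mul_of_nonneg_right _ hl.le
            apply mul_le_mul_of_nonneg_right hq12 (by positivity)
        _ = 8 * R^3 * K^2 * ll m := by ring
    have hfin : |∑ a ∈ Finset.range (2^m), ∑ b ∈ Finset.range (2^m),
        ((if (0 ≤ (a:ℤ) + q.1 ∧ (a:ℤ) + q.1 < ((2^m : ℕ) : ℤ)) ∧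
            (0 ≤ (b:ℤ) + q.2 ∧ (b:ℤ) + q.2 < ((2^m : ℕ) : ℤ)) then
          (u f m ((a:ℤ)+q.1) ((b:ℤ)+q.2) - u f m a b) *
            (u g m ((a:ℤ)+q.1) ((b:ℤ)+q.2) - u g m a b) else 0)
          - (ll m)^2 * Hq f g q (ctr m a b))|
        ≤ ε' * (2*K+1) * R^2 + 8 * R^3 * K^2 * ll m := by
      apply le_trans habs
      rw [ed, e1]
      exact add_le_add le_rfl (le_trans e2 e3)
    apply lt_of_le_of_lt hfin
    have hB : (0:ℝ) < (2*K+1) * R^2 := by positivity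
    have h6 := (le_div_iff₀ hB).1 hε'le
    have h7 : ε' * (2*K+1) * R^2 = ε' * ((2*K+1) * R^2) := by ring
    have h8 : ε' * (2*K+1) * R^2 ≤ ε/2 := le_trans (le_of_eq h7) h6
    calc ε' * (2*K+1) * R^2 + 8 * R^3 * K^2 * ll m
        ≤ ε/2 + 8 * R^3 * K^2 * ll m := by linarith
      _ < ε/2 + ε/2 := by linarith
      _ = ε := by ring
  have h2 := hVW.add hW
  rw [zero_add] at h2
  have e : (fun m => (V f g m q - ∑ a ∈ Finset.range (2^m), ∑ b ∈ Finset.range (2^m),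
      (ll m)^2 * Hq f g q (ctr m a b)) + ∑ a ∈ Finset.range (2^m), ∑ b ∈ Finset.range (2^m),
      (ll m)^2 * Hq f g q (ctr m a b)) = fun m => V f g m q := by
    funext m; ring
  rwa [e] at h2

end S14

/-- the discrete energies converge to the Dirichlet energy (Theorem 3.2). -/
theorem stmt14 (P : Finset (ℤ × ℤ))
    (hP : ∀ p ∈ P, 0 ≤ p.1 ∧ p.1 ≤ p.2 ∧ p.2 ≠ 0)
    (A : ℤ × ℤ → ℝ) (hA : 8 * ∑ p ∈ P, cP p * A p = 1)
    (hA2 : ∑ p ∈ P, ((p.1 : ℝ) ^ 2 + (p.2 : ℝ) ^ 2) * cP p * A p ≠ 0)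
    (Ω : Set (ℝ × ℝ)) (hΩ : IsOpen Ω)
    (hSΩ : Set.Icc (0 : ℝ) 1 ×ˢ Set.Icc (0 : ℝ) 1 ⊆ Ω)
    (f g : ℝ × ℝ → ℝ) (hf : ContDiffOn ℝ 1 f Ω) (hg : ContDiffOn ℝ 1 g Ω) :
    Filter.Tendsto (fun m : ℕ => Em P A f g m) Filter.atTop
      (𝓝 (∫ ξ in Set.Icc (0 : ℝ) 1 ×ˢ Set.Icc (0 : ℝ) 1,
        (pd1 f ξ * pd1 g ξ + pd2 f ξ * pd2 g ξ))) := by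
  have hSQ : (Set.Icc (0 : ℝ) 1 ×ˢ Set.Icc (0 : ℝ) 1) = S14.SQ := rfl
  have hSΩ' : S14.SQ ⊆ Ω := hSΩ
  have hEm := S14.Em_eq P hP A f g
  set Q2 := ∑ p ∈ P, ((p.1 : ℝ) ^ 2 + (p.2 : ℝ) ^ 2) * cP p * A p with hQ2
  set cst := 1 / 2 * Q2⁻¹ / 2 with hcst
  have hlim : Tendsto (fun m => cst * ∑ p ∈ P, A p * ∑ q ∈ S14.Qp p, S14.V f g m q) atTop
      (𝓝 (cst * ∑ p ∈ P, A p * ∑ q ∈ S14.Qp p, ∫ ξ in S14.SQ, S14.Hq f g q ξ)) := by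
    apply Tendsto.const_mul
    apply tendsto_finset_sum
    intro p _
    apply Tendsto.const_mul
    apply tendsto_finset_sum
    intro q _
    exact S14.V_tendsto hΩ hSΩ' hf hg q
  have hval : cst * ∑ p ∈ P, A p * ∑ q ∈ S14.Qp p, ∫ ξ in S14.SQ, S14.Hq f g q ξ
      = ∫ ξ in S14.SQ, (pd1 f ξ * pd1 g ξ + pd2 f ξ * pd2 g ξ) := by
    have hinner : ∀ p ∈ P, (∑ q ∈ S14.Qp p, ∫ ξ in S14.SQ, S14.Hq f g q ξ)
        = 4 * cP p * ((p.1:ℝ)^2 + (p.2:ℝ)^2)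
          * ∫ ξ in S14.SQ, (pd1 f ξ * pd1 g ξ + pd2 f ξ * pd2 g ξ) := by
      intro p hp
      obtain ⟨h1, h12, h2⟩ := hP p hp
      have hint : ∀ q ∈ S14.Qp p, IntegrableOn (S14.Hq f g q) S14.SQ volume := fun q _ =>
        (S14.Hq_contOn hΩ hSΩ' hf hg q).integrableOn_compact S14.SQ_compact
      rw [← MeasureTheory.integral_finset_sum _ hint]
      have hfun : ∀ ξ : ℝ × ℝ, (∑ q ∈ S14.Qp p, S14.Hq f g q ξ)
          = (4 * cP p * ((p.1:ℝ)^2 + (p.2:ℝ)^2))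
            * (pd1 f ξ * pd1 g ξ + pd2 f ξ * pd2 g ξ) := fun ξ =>
        S14.Qp_expand h1 h12 h2 (pd1 f ξ) (pd2 f ξ) (pd1 g ξ) (pd2 g ξ)
      calc ∫ ξ in S14.SQ, (∑ q ∈ S14.Qp p, S14.Hq f g q ξ)
          = ∫ ξ in S14.SQ, (4 * cP p * ((p.1:ℝ)^2 + (p.2:ℝ)^2))
              • (pd1 f ξ * pd1 g ξ + pd2 f ξ * pd2 g ξ) := by
            simp only [hfun, smul_eq_mul]
        _ = (4 * cP p * ((p.1:ℝ)^2 + (p.2:ℝ)^2))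
              • ∫ ξ in S14.SQ, (pd1 f ξ * pd1 g ξ + pd2 f ξ * pd2 g ξ) :=
            integral_smul _ _
        _ = 4 * cP p * ((p.1:ℝ)^2 + (p.2:ℝ)^2)
              * ∫ ξ in S14.SQ, (pd1 f ξ * pd1 g ξ + pd2 f ξ * pd2 g ξ) := by
            rw [smul_eq_mul]
    rw [Finset.sum_congr rfl (fun p hp => by rw [hinner p hp])]
    have hsum : (∑ p ∈ P, A p * (4 * cP p * ((p.1:ℝ)^2 + (p.2:ℝ)^2)
          * ∫ ξ in S14.SQ, (pd1 f ξ * pd1 g ξ + pd2 f ξ * pd2 g ξ)))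
        = Q2 * (4 * ∫ ξ in S14.SQ, (pd1 f ξ * pd1 g ξ + pd2 f ξ * pd2 g ξ)) := by
      rw [hQ2, Finset.sum_mul]
      exact Finset.sum_congr rfl fun p _ => by ring
    rw [hsum, hcst]
    field_simp
    ring
  simp only [hEm]
  rw [hSQ, ← hval]
  exact hlim
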